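/- arXiv:1508.07515 — 7 statements merged into one kernel-verified Lean document; each statement's English description precedes it below -/
import Mathlib

section
/- The generating polynomial of the statistic maj^+ over 321-avoiding centrosymmetric involutions of S_{2n} satisfies ∑_{π ∈ I^C_{2n}(321)} q^{maj^+(π)} = ∑_{h=0}^{n} q^{n-h} · [n choose h]_q, where [n choose h]_q denotes the Gaussian (q-)binomial coefficient. -/
open Finset Polynomial
open scoped Classical

/-- 1-based value of a permutation of `Fin m`: `pval π i = π(i)` for `1 ≤ i ≤ m`. -/
def pval {m : ℕ} (π : Equiv.Perm (Fin m)) (i : ℕ) : ℕ :=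
  if h : i - 1 < m then (π ⟨i - 1, h⟩ : ℕ) + 1 else 0

/-- `π` is centrosymmetric: `π(i) + π(m+1-i) = m+1` for all `1 ≤ i ≤ m`. -/
def Centro {m : ℕ} (π : Equiv.Perm (Fin m)) : Prop :=
  ∀ i ∈ Finset.Icc 1 m, pval π i + pval π (m + 1 - i) = m + 1

/-- `π` avoids the pattern 321: no decreasing subsequence of length 3. -/
def Avoids321 {m : ℕ} (π : Equiv.Perm (Fin m)) : Prop :=
  ¬ ∃ i j k : Fin m, i < j ∧ j < k ∧ π k < π j ∧ π j < π i

/-- The descent set of `π`: positions `1 ≤ i < m` with `π(i) > π(i+1)`. -/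
def DesSet {m : ℕ} (π : Equiv.Perm (Fin m)) : Finset ℕ :=
  (Finset.Ico 1 m).filter (fun i => pval π (i + 1) < pval π i)

/-- The number of descents of `π`. -/
def desNum {m : ℕ} (π : Equiv.Perm (Fin m)) : ℕ := (DesSet π).card

/-- The major index of `π`: the sum of the descent positions. -/
def majStat {m : ℕ} (π : Equiv.Perm (Fin m)) : ℕ := ∑ i ∈ DesSet π, i

/-- The excedances of `π ∈ S_{2n}` among positions `1,…,n`. -/
def Epi {n : ℕ} (π : Equiv.Perm (Fin (2 * n))) : Finset ℕ :=
  (Finset.Icc 1 n).filter (fun i => i < pval π i)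

/-- The set `I^C_{2n}(321)` of 321-avoiding centrosymmetric involutions of `S_{2n}`. -/
noncomputable def ICset (n : ℕ) : Finset (Equiv.Perm (Fin (2 * n))) :=
  Finset.univ.filter (fun π => Function.Involutive π ∧ Centro π ∧ Avoids321 π)

/-- The Gaussian (q-)binomial coefficient `[n choose k]_q` as a polynomial in `q`. -/
noncomputable def qbinom : ℕ → ℕ → Polynomial ℤ
  | _, 0 => 1
  | 0, _ + 1 => 0
  | n + 1, k + 1 => qbinom n k + Polynomial.X ^ (k + 1) * qbinom n (k + 1)





lemma qbinom_zero_right (n : ℕ) : qbinom n 0 = 1 := by cases n <;> rfl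

lemma qbinom_pascal (n k : ℕ) :
    qbinom (n+1) (k+1) = qbinom n k + X ^ (k+1) * qbinom n (k+1) := rfl

lemma qbinom_of_lt : ∀ n k : ℕ, n < k → qbinom n k = 0 := by
  intro n
  induction n with
  | zero => intro k hk; match k, hk with | (k+1), _ => rfl
  | succ n ih =>
    intro k hk
    match k, hk with
    | (k+1), hk =>
      rw [qbinom_pascal, ih k (by omega), ih (k+1) (by omega)]
      ring

lemma qbinom_self : ∀ n : ℕ, qbinom n n = 1 := by
  intro n
  induction n with
  | zero => rfl
  | succ n ih => rw [qbinom_pascal, ih, qbinom_of_lt n (n+1) (by omega)]; ring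

lemma geom_step (m : ℕ) :
    (1 : Polynomial ℤ) + X ^ 1 * ∑ i ∈ range m, X ^ i = ∑ i ∈ range (m+1), X ^ i := by
  rw [Finset.sum_range_succ' (fun i => (X:Polynomial ℤ) ^ i) m, Finset.mul_sum]
  simp [pow_succ, add_comm, mul_comm]

lemma qbinom_one (n : ℕ) : qbinom n 1 = ∑ i ∈ range n, X ^ i := by
  induction n with
  | zero => simp [qbinom_of_lt 0 1 (by omega)]
  | succ n ih => rw [qbinom_pascal, qbinom_zero_right, ih, geom_step]

lemma qbinom_pascal2 : ∀ n k : ℕ, k ≤ n →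
    qbinom (n+1) (k+1) = X ^ (n-k) * qbinom n k + qbinom n (k+1) := by
  intro n
  induction n with
  | zero =>
    intro k hk
    interval_cases k
    simp [qbinom_pascal, qbinom_zero_right, qbinom_of_lt 0 1 (by omega)]
  | succ n ih =>
    intro k hk
    match k with
    | 0 =>
      rw [qbinom_pascal, qbinom_zero_right, qbinom_one, geom_step,
        Finset.sum_range_succ, Nat.sub_zero]
      ring
    | (j+1) =>
      rcases Nat.lt_or_ge j n with hj | hj
      · obtain ⟨d, rfl⟩ : ∃ d, n = j + d + 1 := ⟨n-j-1, by omega⟩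
        have e1 := qbinom_pascal (j+d+2) (j+1)
        have e2 := qbinom_pascal (j+d+1) j
        have e3 := qbinom_pascal (j+d+1) (j+1)
        have e4 := ih j (by omega)
        have e5 := ih (j+1) (by omega)
        simp only [show j+d+1-j = d+1 by omega, show j+d+1-(j+1) = d by omega,
          show j+d+1+1-(j+1) = d+1 by omega, show j+d+2 = j+d+1+1 by omega] at *
        linear_combination e1 - X^(d+1) * e2 - e3 + e4 + X^(j+2) * e5
      · have hj' : j = n := by omega
        subst hj'
        rw [qbinom_self, qbinom_of_lt (j+1) (j+1+1) (by omega), qbinom_self]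
        simp

lemma qbinom_symm : ∀ n k : ℕ, k ≤ n → qbinom n (n-k) = qbinom n k := by
  intro n
  induction n with
  | zero => intro k hk; interval_cases k; rfl
  | succ n ih =>
    intro k hk
    match k with
    | 0 => simp [qbinom_self, qbinom_zero_right]
    | (j+1) =>
      rcases Nat.lt_or_ge j n with hj | hj
      · have h1 : n + 1 - (j+1) = (n - (j+1)) + 1 := by omega
        rw [h1, qbinom_pascal2 n (n-(j+1)) (by omega),
          show n - (n - (j+1)) = j + 1 by omega,
          ih (j+1) (by omega),
          show n - (j+1) + 1 = n - j by omega,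
          show (qbinom n (n-j) = qbinom n j) from ih j (by omega),
          qbinom_pascal]
        ring
      · have hj' : j = n := by omega
        subst hj'
        simp [qbinom_self, qbinom_zero_right,
          show j + 1 - (j+1) = 0 by omega]







noncomputable def Gpoly (n : ℕ) : Polynomial ℤ := ∑ h ∈ range (n+1), X ^ (n-h) * qbinom n h
noncomputable def Tpoly (n : ℕ) : Polynomial ℤ := ∑ h ∈ range (n+1), qbinom n h

lemma Gpoly_succ (n : ℕ) : Gpoly (n+1) = Gpoly n + X^(n+1) * Tpoly n := by
  unfold Gpoly Tpoly
  rw [Finset.sum_range_succ' (fun h => X ^ (n+1-h) * qbinom (n+1) h) (n+1)]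
  have h1 : ∀ h ∈ range (n+1), X ^ (n+1-(h+1)) * qbinom (n+1) (h+1)
      = X ^ (n-h) * qbinom n h + X^(n+1) * qbinom n (h+1) := by
    intro h hh
    simp only [Finset.mem_range] at hh
    rw [qbinom_pascal, show n+1-(h+1) = n-h by omega]
    have : (X:Polynomial ℤ) ^ (n-h) * X ^ (h+1) = X ^ (n+1) := by
      rw [← pow_add]; congr 1; omega
    rw [mul_add, ← mul_assoc, this]
  rw [Finset.sum_congr rfl h1, Finset.sum_add_distrib, Nat.sub_zero, qbinom_zero_right]
  have h2 : ∑ h ∈ range (n+1), X^(n+1) * qbinom n (h+1)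
      = X^(n+1) * (∑ h ∈ range (n+1), qbinom n h - 1) := by
    rw [Finset.sum_range_succ' (fun h => qbinom n h) n, qbinom_zero_right, ← Finset.mul_sum]
    rw [Finset.sum_range_succ]
    rw [qbinom_of_lt n (n+1) (by omega)]
    ring
  rw [h2]; ring

lemma sum_Xh (n : ℕ) : ∑ h ∈ range (n+1), X ^ h * qbinom n h = Gpoly n := by
  unfold Gpoly
  conv_rhs => rw [← Finset.sum_range_reflect (fun h => X ^ (n-h) * qbinom n h) (n+1)]
  refine Finset.sum_congr rfl ?_
  intro h hh
  simp only [Finset.mem_range] at hh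
  rw [show n + 1 - 1 - h = n - h by omega, show n - (n-h) = h by omega,
    qbinom_symm n h (by omega)]

lemma Tpoly_succ (n : ℕ) : Tpoly (n+1) = Tpoly n + Gpoly n := by
  unfold Tpoly
  rw [Finset.sum_range_succ' (fun h => qbinom (n+1) h) (n+1), qbinom_zero_right]
  have h1 : ∀ h ∈ range (n+1), qbinom (n+1) (h+1)
      = qbinom n h + X ^ (h+1) * qbinom n (h+1) := fun h _ => qbinom_pascal n h
  rw [Finset.sum_congr rfl h1, Finset.sum_add_distrib]
  have h2 : ∑ h ∈ range (n+1), X^(h+1) * qbinom n (h+1) = Gpoly n - 1 := by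
    rw [← sum_Xh n, Finset.sum_range_succ' (fun h => X ^ h * qbinom n h) n,
      qbinom_zero_right]
    rw [Finset.sum_range_succ, qbinom_of_lt n (n+1) (by omega)]
    ring
  rw [h2]; ring

lemma Gpoly_zero : Gpoly 0 = 1 := by simp [Gpoly, qbinom_zero_right]
lemma Gpoly_one : Gpoly 1 = 1 + X := by
  simp [Gpoly, Finset.sum_range_succ, qbinom_zero_right, qbinom_self]
  ring

lemma Gpoly_rec (n : ℕ) :
    Gpoly (n+2) = (1+X) * Gpoly (n+1) + (X^(n+2) - X) * Gpoly n := by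
  have h1 := Gpoly_succ (n+1)
  have h2 := Tpoly_succ n
  have h3 := Gpoly_succ n
  have e : (X:Polynomial ℤ)^(n+2) = X * X^(n+1) := by rw [← pow_succ']
  calc Gpoly (n+2) = Gpoly (n+1) + X^(n+2) * Tpoly (n+1) := h1
    _ = Gpoly (n+1) + X^(n+2) * (Tpoly n + Gpoly n) := by rw [h2]
    _ = Gpoly (n+1) + X * (X^(n+1) * Tpoly n) + X^(n+2) * Gpoly n := by rw [e]; ring
    _ = Gpoly (n+1) + X * (Gpoly (n+1) - Gpoly n) + X^(n+2) * Gpoly n := by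
        rw [h3]; ring
    _ = (1+X) * Gpoly (n+1) + (X^(n+2) - X) * Gpoly n := by ring






def runEndSum (S : Finset ℕ) : ℕ := ∑ p ∈ S.filter (fun p => p+1 ∉ S), p

noncomputable def Lpoly (n : ℕ) : Polynomial ℤ :=
  ∑ S ∈ (Icc 1 n).powerset, X ^ runEndSum S

lemma res_insert_filter {m : ℕ} {S : Finset ℕ} (h2 : m+1 ∉ S) (h3 : m+2 ∉ S) :
    (insert (m+1) S).filter (fun p => p+1 ∉ insert (m+1) S)
      = insert (m+1) (S.filter (fun p => p ≠ m ∧ p+1 ∉ S)) := by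
  ext p
  simp only [Finset.mem_filter, Finset.mem_insert]
  constructor
  · rintro ⟨hp | hp, hq⟩
    · exact Or.inl hp
    · refine Or.inr ⟨hp, ?_, ?_⟩
      · rintro rfl; exact hq (Or.inl rfl)
      · intro hc; exact hq (Or.inr hc)
  · rintro (rfl | ⟨hp, hne, hq⟩)
    · refine ⟨Or.inl rfl, ?_⟩
      rintro (h | h)
      · omega
      · exact h3 h
    · refine ⟨Or.inr hp, ?_⟩
      rintro (h | h)
      · exact hne (by omega)
      · exact hq h

lemma resA {m : ℕ} {S : Finset ℕ} (h1 : m ∉ S) (h2 : m+1 ∉ S) (h3 : m+2 ∉ S) :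
    runEndSum (insert (m+1) S) = runEndSum S + (m+1) := by
  unfold runEndSum
  rw [res_insert_filter h2 h3]
  have hfe : S.filter (fun p => p ≠ m ∧ p+1 ∉ S) = S.filter (fun p => p+1 ∉ S) := by
    refine Finset.filter_congr ?_
    intro p hp
    have : p ≠ m := fun h => h1 (h ▸ hp)
    simp [this]
  rw [hfe, Finset.sum_insert (by
    intro hc
    exact h2 (Finset.mem_of_mem_filter _ hc))]
  ring

lemma resB {m : ℕ} {S : Finset ℕ} (h1 : m ∈ S) (h2 : m+1 ∉ S) (h3 : m+2 ∉ S) :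
    runEndSum (insert (m+1) S) = runEndSum S + 1 := by
  unfold runEndSum
  rw [res_insert_filter h2 h3]
  have hfe : S.filter (fun p => p ≠ m ∧ p+1 ∉ S)
      = (S.filter (fun p => p+1 ∉ S)).erase m := by
    ext p
    simp only [Finset.mem_filter, Finset.mem_erase]
    tauto
  rw [hfe, Finset.sum_insert (by
    intro hc
    exact h2 (Finset.mem_of_mem_filter _ (Finset.mem_of_mem_erase hc)))]
  have hm : m ∈ S.filter (fun p => p+1 ∉ S) := Finset.mem_filter.mpr ⟨h1, h2⟩
  have h4 := Finset.sum_erase_add (S.filter (fun p => p+1 ∉ S)) (fun p => p) hm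
  omega

lemma Icc_succ_ins (n : ℕ) : Icc 1 (n+1) = insert (n+1) (Icc 1 n) := by
  ext p; simp [Finset.mem_Icc]; omega

lemma Lpoly_split (n : ℕ) :
    Lpoly (n+1) = Lpoly n + ∑ S ∈ (Icc 1 n).powerset, X ^ runEndSum (insert (n+1) S) := by
  unfold Lpoly
  rw [Icc_succ_ins n, Finset.sum_powerset_insert (by simp)]

lemma Lpoly_rec (n : ℕ) :
    Lpoly (n+2) = (1+X) * Lpoly (n+1) + (X^(n+2) - X) * Lpoly n := by
  have key2 : ∑ S ∈ (Icc 1 (n+1)).powerset, (X:Polynomial ℤ) ^ runEndSum (insert (n+2) S)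
      = X^(n+2) * Lpoly n + X * (∑ S ∈ (Icc 1 n).powerset, X ^ runEndSum (insert (n+1) S)) := by
    rw [Icc_succ_ins n, Finset.sum_powerset_insert (by simp)]
    unfold Lpoly
    congr 1
    · rw [Finset.mul_sum]
      refine Finset.sum_congr rfl ?_
      intro S hS
      simp only [Finset.mem_powerset] at hS
      have h1 : n+1 ∉ S := fun h => by have := hS h; rw [Finset.mem_Icc] at this; omega
      have h2 : n+2 ∉ S := fun h => by have := hS h; rw [Finset.mem_Icc] at this; omega
      have h3 : n+3 ∉ S := fun h => by have := hS h; rw [Finset.mem_Icc] at this; omega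
      rw [resA h1 h2 h3 (m := n+1), pow_add]
      ring
    · rw [Finset.mul_sum]
      refine Finset.sum_congr rfl ?_
      intro S hS
      simp only [Finset.mem_powerset] at hS
      have h2 : n+2 ∉ insert (n+1) S := by
        intro hc
        rcases Finset.mem_insert.mp hc with h | h
        · omega
        · have := hS h; rw [Finset.mem_Icc] at this; omega
      have h3 : n+3 ∉ insert (n+1) S := by
        intro hc
        rcases Finset.mem_insert.mp hc with h | h
        · omega
        · have := hS h; rw [Finset.mem_Icc] at this; omega
      rw [resB (Finset.mem_insert_self _ _) h2 h3 (m := n+1), pow_add]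
      ring
  have e1 := Lpoly_split (n+1)
  have e2 := Lpoly_split n
  rw [e1, key2]
  have : ∑ S ∈ (Icc 1 n).powerset, (X:Polynomial ℤ) ^ runEndSum (insert (n+1) S)
      = Lpoly (n+1) - Lpoly n := by rw [e2]; ring
  rw [this]
  ring

lemma Lpoly_zero : Lpoly 0 = 1 := by
  simp [Lpoly, runEndSum]

lemma Lpoly_one : Lpoly 1 = 1 + X := by
  rw [Lpoly_split 0, Lpoly_zero]
  have h0 : (Icc 1 0 : Finset ℕ) = ∅ := by simp
  rw [h0, Finset.powerset_empty, Finset.sum_singleton]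
  have h1 : runEndSum (insert 1 ∅) = 1 := by
    unfold runEndSum
    have : (insert 1 (∅ : Finset ℕ)).filter
        (fun p => p+1 ∉ insert 1 (∅ : Finset ℕ)) = {1} := by
      ext p
      simp only [Finset.mem_filter, Finset.mem_insert, Finset.mem_singleton,
        Finset.notMem_empty, or_false]
      constructor
      · rintro ⟨h, _⟩; exact h
      · rintro rfl; exact ⟨rfl, by omega⟩
    rw [this, Finset.sum_singleton]
  rw [h1, pow_one]

lemma Lpoly_eq_Gpoly (n : ℕ) : Lpoly n = Gpoly n := by
  induction n using Nat.strong_induction_on with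
  | _ n ih =>
    match n with
    | 0 => rw [Lpoly_zero, Gpoly_zero]
    | 1 => rw [Lpoly_one, Gpoly_one]
    | (m+2) =>
      rw [Lpoly_rec, Gpoly_rec, ih (m+1) (by omega), ih m (by omega)]


noncomputable section

/-- balance of the greedy opener/closer word determined by `S` -/
def bal (S : Finset ℕ) : ℕ → ℕ
  | 0 => 0
  | p+1 => if p+1 ∈ S then bal S p + 1 else bal S p - 1

lemma bal_succ (S : Finset ℕ) (p : ℕ) :
    bal S (p+1) = if p+1 ∈ S then bal S p + 1 else bal S p - 1 := rfl

/-- first-half closers -/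
def Cf (n : ℕ) (S : Finset ℕ) : Finset ℕ :=
  (Icc 1 n).filter (fun p => p ∉ S ∧ 0 < bal S (p-1))

/-- reflection `p ↦ 2n+1-p` -/
def rf (n : ℕ) (p : ℕ) : ℕ := 2*n+1 - p

def Oset (n : ℕ) (S : Finset ℕ) : Finset ℕ := S ∪ (Cf n S).image (rf n)
def Cset (n : ℕ) (S : Finset ℕ) : Finset ℕ := Cf n S ∪ S.image (rf n)

def cnt (A : Finset ℕ) (j : ℕ) : ℕ := (A.filter (· ≤ j)).card

lemma cnt_succ (A : Finset ℕ) (p : ℕ) :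
    cnt A (p+1) = cnt A p + (if p+1 ∈ A then 1 else 0) := by
  unfold cnt
  by_cases h : p+1 ∈ A
  · rw [if_pos h]
    have he : A.filter (· ≤ p+1) = insert (p+1) (A.filter (· ≤ p)) := by
      ext x
      simp only [mem_filter, mem_insert]
      constructor
      · rintro ⟨hx, hle⟩
        rcases Nat.lt_or_ge x (p+1) with h' | h'
        · exact Or.inr ⟨hx, by omega⟩
        · exact Or.inl (by omega)
      · rintro (rfl | ⟨hx, hle⟩)
        · exact ⟨h, le_refl _⟩
        · exact ⟨hx, by omega⟩
    rw [he, card_insert_of_notMem (fun hc => absurd (Finset.mem_filter.mp hc).2 (by omega))]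
  · rw [if_neg h]
    have he : A.filter (· ≤ p+1) = A.filter (· ≤ p) := by
      ext x
      simp only [mem_filter]
      constructor
      · rintro ⟨hx, hle⟩
        refine ⟨hx, ?_⟩
        rcases Nat.lt_or_ge x (p+1) with h' | h'
        · omega
        · exfalso; have : x = p+1 := by omega
          exact h (this ▸ hx)
      · rintro ⟨hx, hle⟩; exact ⟨hx, by omega⟩
    rw [he]
    omega

lemma cnt_zero {A : Finset ℕ} (hA : ∀ x ∈ A, 1 ≤ x) : cnt A 0 = 0 := by
  unfold cnt
  rw [Finset.card_eq_zero]
  ext x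
  simp only [mem_filter, Finset.notMem_empty, iff_false]
  rintro ⟨hx, hle⟩
  have := hA x hx
  omega

lemma cnt_of_le {A : Finset ℕ} {m j : ℕ} (hA : ∀ x ∈ A, x ≤ m) (h : m ≤ j) :
    cnt A j = A.card := by
  unfold cnt
  congr 1
  apply Finset.filter_true_of_mem
  intro x hx
  have := hA x hx
  omega

lemma cnt_le_card (A : Finset ℕ) (j : ℕ) : cnt A j ≤ A.card :=
  Finset.card_filter_le _ _

lemma mem_Cf {n : ℕ} {S : Finset ℕ} {p : ℕ} :
    p ∈ Cf n S ↔ (1 ≤ p ∧ p ≤ n) ∧ p ∉ S ∧ 0 < bal S (p-1) := by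
  simp [Cf, mem_filter, mem_Icc]

/-- main first-half count identity -/
lemma count_bal {n : ℕ} {S : Finset ℕ} (hS : S ⊆ Icc 1 n) :
    ∀ p, p ≤ n → cnt S p = cnt (Cf n S) p + bal S p := by
  intro p
  induction p with
  | zero =>
    intro _
    rw [cnt_zero (fun x hx => (mem_Icc.mp (hS hx)).1),
      cnt_zero (fun x hx => (mem_Cf.mp hx).1.1)]
    rfl
  | succ p ih =>
    intro hp
    have ihp := ih (by omega)
    rw [cnt_succ, cnt_succ, bal_succ]
    by_cases h : p+1 ∈ S
    · have hc : p+1 ∉ Cf n S := fun hc => (mem_Cf.mp hc).2.1 h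
      rw [if_pos h, if_neg hc, if_pos h]
      omega
    · rw [if_neg h, if_neg h]
      have hps : (p+1) - 1 = p := by omega
      by_cases hb : 0 < bal S p
      · have hc : p+1 ∈ Cf n S := mem_Cf.mpr ⟨⟨by omega, by omega⟩, h, by rwa [hps]⟩
        rw [if_pos hc]
        omega
      · have hc : p+1 ∉ Cf n S := fun hc => by
          have := (mem_Cf.mp hc).2.2
          rw [hps] at this
          omega
        rw [if_neg hc]
        omega

lemma bal_le_of_mem {n : ℕ} {S : Finset ℕ} (hS : S ⊆ Icc 1 n) {p : ℕ} (hp : p ∈ S) :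
    0 < bal S p := by
  have h1 : 1 ≤ p := (mem_Icc.mp (hS hp)).1
  obtain ⟨q, rfl⟩ : ∃ q, p = q + 1 := ⟨p - 1, by omega⟩
  rw [bal_succ, if_pos hp]
  omega

lemma Cf_subset {n : ℕ} {S : Finset ℕ} : Cf n S ⊆ Icc 1 n :=
  Finset.filter_subset _ _

lemma rf_invol {n p : ℕ} (hp : p ∈ Icc 1 (2*n)) : rf n (rf n p) = p := by
  simp only [mem_Icc] at hp
  unfold rf
  omega

lemma rf_mem {n p : ℕ} (hp : p ∈ Icc 1 n) : rf n p ∈ Icc (n+1) (2*n) := by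
  simp only [mem_Icc] at hp ⊢
  unfold rf
  omega

lemma rf_injOn {n : ℕ} {A : Finset ℕ} (hA : A ⊆ Icc 1 (2*n)) :
    Set.InjOn (rf n) A := by
  intro x hx y hy hxy
  have hx' := mem_Icc.mp (hA hx)
  have hy' := mem_Icc.mp (hA hy)
  unfold rf at hxy
  omega

/-- count of reflected set: `cnt (rf '' A) j + cnt A (2n-j) = A.card` -/
lemma cnt_image_rf {n : ℕ} {A : Finset ℕ} (hA : A ⊆ Icc 1 n) {j : ℕ} (hj : j ≤ 2*n) :
    cnt (A.image (rf n)) j + cnt A (2*n - j) = A.card := by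
  unfold cnt
  have h1 : (A.image (rf n)).filter (· ≤ j) = (A.filter (fun p => rf n p ≤ j)).image (rf n) := by
    ext y
    simp only [mem_filter, mem_image]
    constructor
    · rintro ⟨⟨x, hx, rfl⟩, hy⟩
      exact ⟨x, ⟨hx, hy⟩, rfl⟩
    · rintro ⟨x, ⟨hx, hq⟩, rfl⟩
      exact ⟨⟨x, hx, rfl⟩, hq⟩
  rw [h1, Finset.card_image_of_injOn (Set.InjOn.mono (by
      intro x hx
      exact Finset.mem_coe.mpr (Finset.mem_of_mem_filter _ (Finset.mem_coe.mp hx)))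
    (rf_injOn (A := A) (fun x hx => by
      have := mem_Icc.mp (hA hx); simp only [mem_Icc]; omega)))]
  have h2 : A.filter (fun p => rf n p ≤ j) = A.filter (fun p => ¬ (p ≤ 2*n - j)) := by
    apply Finset.filter_congr
    intro x hx
    have := mem_Icc.mp (hA hx)
    unfold rf
    constructor
    · intro h; omega
    · intro h; omega
  rw [h2]
  have := Finset.card_filter_add_card_filter_not
    (s := A) (p := fun p => p ≤ 2*n - j)
  omega

end

noncomputable section


variable {n : ℕ} {S : Finset ℕ}

lemma Icc1n_sub : Icc 1 n ⊆ Icc 1 (2*n) := by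
  intro x hx; simp only [mem_Icc] at *; omega

lemma image_rf_subset {A : Finset ℕ} (hA : A ⊆ Icc 1 n) :
    A.image (rf n) ⊆ Icc (n+1) (2*n) :=
  fun y hy => by
    obtain ⟨x, hx, rfl⟩ := Finset.mem_image.mp hy
    exact rf_mem (hA hx)

lemma Oset_subset (hS : S ⊆ Icc 1 n) : Oset n S ⊆ Icc 1 (2*n) := by
  unfold Oset
  intro x hx
  rcases Finset.mem_union.mp hx with h | h
  · exact Icc1n_sub (hS h)
  · have := image_rf_subset Cf_subset h
    simp only [mem_Icc] at *; omega

lemma Cset_subset (hS : S ⊆ Icc 1 n) : Cset n S ⊆ Icc 1 (2*n) := by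
  unfold Cset
  intro x hx
  rcases Finset.mem_union.mp hx with h | h
  · exact Icc1n_sub (Cf_subset h)
  · have := image_rf_subset hS h
    simp only [mem_Icc] at *; omega

/-- membership unfolding, first half -/
lemma mem_Oset_low (hS : S ⊆ Icc 1 n) {p : ℕ} (hp : p ≤ n) : p ∈ Oset n S ↔ p ∈ S := by
  unfold Oset
  rw [Finset.mem_union]
  constructor
  · rintro (h | h)
    · exact h
    · exfalso
      have := image_rf_subset (Cf_subset (n := n) (S := S)) h
      simp only [mem_Icc] at this
      omega
  · exact Or.inl

lemma mem_Cset_low {p : ℕ} (hS : S ⊆ Icc 1 n) (hp : p ≤ n) : p ∈ Cset n S ↔ p ∈ Cf n S := by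
  unfold Cset
  rw [Finset.mem_union]
  constructor
  · rintro (h | h)
    · exact h
    · exfalso
      have := image_rf_subset hS h
      simp only [mem_Icc] at this
      omega
  · exact Or.inl

lemma mem_image_rf_iff {A : Finset ℕ} (hA : A ⊆ Icc 1 n) {p : ℕ}
    (hp : n + 1 ≤ p) (hp2 : p ≤ 2*n) : p ∈ A.image (rf n) ↔ rf n p ∈ A := by
  constructor
  · rintro hm
    obtain ⟨x, hx, rfl⟩ := Finset.mem_image.mp hm
    rwa [rf_invol (Icc1n_sub (hA hx))]
  · intro h
    refine Finset.mem_image.mpr ⟨rf n p, h, ?_⟩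
    exact rf_invol (by simp only [mem_Icc]; omega)

lemma mem_Oset_high (hS : S ⊆ Icc 1 n) {p : ℕ} (hp : n+1 ≤ p) (hp2 : p ≤ 2*n) :
    p ∈ Oset n S ↔ rf n p ∈ Cf n S := by
  unfold Oset
  rw [Finset.mem_union, mem_image_rf_iff Cf_subset hp hp2]
  constructor
  · rintro (h | h)
    · exfalso; have := mem_Icc.mp (hS h); omega
    · exact h
  · exact Or.inr

lemma mem_Cset_high (hS : S ⊆ Icc 1 n) {p : ℕ} (hp : n+1 ≤ p) (hp2 : p ≤ 2*n) :
    p ∈ Cset n S ↔ rf n p ∈ S := by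
  unfold Cset
  rw [Finset.mem_union, mem_image_rf_iff hS hp hp2]
  constructor
  · rintro (h | h)
    · exfalso; have := mem_Icc.mp (Cf_subset h); omega
    · exact h
  · exact Or.inr

lemma Oset_Cset_disjoint (hS : S ⊆ Icc 1 n) : ∀ p, p ∈ Oset n S → p ∈ Cset n S → False := by
  intro p hO hC
  have hp := mem_Icc.mp (Oset_subset hS hO)
  rcases Nat.lt_or_ge n p with h | h
  · rw [mem_Oset_high hS (by omega) (by omega)] at hO
    rw [mem_Cset_high hS (by omega) (by omega)] at hC
    exact (mem_Cf.mp hO).2.1 hC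
  · rw [mem_Oset_low hS h] at hO
    rw [mem_Cset_low hS h] at hC
    exact (mem_Cf.mp hC).2.1 hO

/-- the grand count identity -/
lemma cnt_O_eq (hS : S ⊆ Icc 1 n) {j : ℕ} (hj : j ≤ 2*n) :
    cnt (Oset n S) j = cnt (Cset n S) j + bal S (min j (2*n - j)) := by
  have hds : Disjoint S ((Cf n S).image (rf n)) := by
    rw [Finset.disjoint_left]
    intro a ha hb
    have h1 := mem_Icc.mp (hS ha)
    have h2 := mem_Icc.mp (image_rf_subset Cf_subset hb)
    omega
  have hds' : Disjoint (Cf n S) (S.image (rf n)) := by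
    rw [Finset.disjoint_left]
    intro a ha hb
    have h1 := mem_Icc.mp (Cf_subset ha)
    have h2 := mem_Icc.mp (image_rf_subset hS hb)
    omega
  have hO : cnt (Oset n S) j = cnt S j + cnt ((Cf n S).image (rf n)) j := by
    unfold Oset cnt
    rw [Finset.filter_union, Finset.card_union_of_disjoint
      (Finset.disjoint_filter_filter hds)]
  have hC : cnt (Cset n S) j = cnt (Cf n S) j + cnt (S.image (rf n)) j := by
    unfold Cset cnt
    rw [Finset.filter_union, Finset.card_union_of_disjoint
      (Finset.disjoint_filter_filter hds')]
  have h1 := cnt_image_rf (A := Cf n S) Cf_subset hj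
  have h2 := cnt_image_rf (A := S) hS hj
  rcases le_or_gt j n with h | h
  · -- j ≤ n : min = j
    have hmin : min j (2*n - j) = j := by omega
    rw [hmin, hO, hC]
    have e1 : cnt (Cf n S) (2*n - j) = (Cf n S).card :=
      cnt_of_le (fun x hx => (mem_Icc.mp (Cf_subset hx)).2) (by omega)
    have e2 : cnt S (2*n - j) = S.card :=
      cnt_of_le (fun x hx => (mem_Icc.mp (hS hx)).2) (by omega)
    have e3 := count_bal hS j h
    omega
  · have hmin : min j (2*n - j) = 2*n - j := by omega
    rw [hmin, hO, hC]
    have e1 : cnt S j = S.card :=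
      cnt_of_le (fun x hx => (mem_Icc.mp (hS hx)).2) (by omega)
    have e2 : cnt (Cf n S) j = (Cf n S).card :=
      cnt_of_le (fun x hx => (mem_Icc.mp (Cf_subset hx)).2) (by omega)
    have e3 := count_bal hS (2*n - j) (by omega)
    omega

lemma card_Oset_Cset (hS : S ⊆ Icc 1 n) : (Cset n S).card = (Oset n S).card := by
  have h := cnt_O_eq hS (j := 2*n) (le_refl _)
  have hO : cnt (Oset n S) (2*n) = (Oset n S).card :=
    cnt_of_le (fun x hx => (mem_Icc.mp (Oset_subset hS hx)).2) (le_refl _)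
  have hC : cnt (Cset n S) (2*n) = (Cset n S).card :=
    cnt_of_le (fun x hx => (mem_Icc.mp (Cset_subset hS hx)).2) (le_refl _)
  have hb : bal S (min (2*n) (2*n - 2*n)) = 0 := by
    have : min (2*n) (2*n - 2*n) = 0 := by omega
    rw [this]; rfl
  omega

end


noncomputable section

-- generic order-embedding counting lemmas
lemma emb_image_Iio {s : Finset ℕ} {k : ℕ} (h : s.card = k) (t : Fin k) :
    (Finset.Iio t).image (s.orderEmbOfFin h) = s.filter (· < s.orderEmbOfFin h t) := by
  ext y
  simp only [Finset.mem_image, Finset.mem_filter, Finset.mem_Iio]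
  constructor
  · rintro ⟨i, hi, rfl⟩
    exact ⟨Finset.orderEmbOfFin_mem s h i, (s.orderEmbOfFin h).strictMono hi⟩
  · rintro ⟨hy, hlt⟩
    have : y ∈ Set.range (s.orderEmbOfFin h) := by
      rw [Finset.range_orderEmbOfFin]; exact hy
    obtain ⟨i, rfl⟩ := this
    exact ⟨i, (s.orderEmbOfFin h).strictMono.lt_iff_lt.mp hlt, rfl⟩

lemma emb_count_self {s : Finset ℕ} {k : ℕ} (h : s.card = k) (t : Fin k) :
    (s.filter (· < s.orderEmbOfFin h t)).card = t := by
  rw [← emb_image_Iio h t, Finset.card_image_of_injective _ (s.orderEmbOfFin h).injective,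
    Fin.card_Iio]

lemma emb_lt_iff {s : Finset ℕ} {k : ℕ} (h : s.card = k) (t : Fin k) (x : ℕ) :
    s.orderEmbOfFin h t < x ↔ (t : ℕ) < (s.filter (· < x)).card := by
  constructor
  · intro hlt
    have hsub : insert (s.orderEmbOfFin h t) (s.filter (· < s.orderEmbOfFin h t))
        ⊆ s.filter (· < x) := by
      intro y hy
      rcases Finset.mem_insert.mp hy with rfl | hy
      · exact Finset.mem_filter.mpr ⟨Finset.orderEmbOfFin_mem s h t, hlt⟩
      · have := Finset.mem_filter.mp hy
        exact Finset.mem_filter.mpr ⟨this.1, lt_trans this.2 hlt⟩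
    have hcard := Finset.card_le_card hsub
    rw [Finset.card_insert_of_notMem (by simp only [Finset.mem_filter]; intro hc; omega),
      emb_count_self] at hcard
    omega
  · intro hlt
    by_contra hc
    push_neg at hc
    have hsub : s.filter (· < x) ⊆ s.filter (· < s.orderEmbOfFin h t) := by
      intro y hy
      have := Finset.mem_filter.mp hy
      exact Finset.mem_filter.mpr ⟨this.1, lt_of_lt_of_le this.2 hc⟩
    have := Finset.card_le_card hsub
    rw [emb_count_self] at this
    omega

lemma exists_emb {s : Finset ℕ} {k : ℕ} (h : s.card = k) {x : ℕ} (hx : x ∈ s) :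
    ∃ t, s.orderEmbOfFin h t = x := by
  have : x ∈ Set.range (s.orderEmbOfFin h) := by
    rw [Finset.range_orderEmbOfFin]; exact hx
  exact this

end


noncomputable section
variable {n : ℕ} {S : Finset ℕ}

def oemb (n : ℕ) (S : Finset ℕ) : Fin (Oset n S).card ↪o ℕ :=
  (Oset n S).orderEmbOfFin rfl

def cemb (n : ℕ) (S : Finset ℕ) (hS : S ⊆ Icc 1 n) : Fin (Oset n S).card ↪o ℕ :=
  (Cset n S).orderEmbOfFin (card_Oset_Cset hS)

lemma oemb_mem (t : Fin (Oset n S).card) : oemb n S t ∈ Oset n S :=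
  Finset.orderEmbOfFin_mem _ _ _

lemma cemb_mem (hS : S ⊆ Icc 1 n) (t : Fin (Oset n S).card) : cemb n S hS t ∈ Cset n S :=
  Finset.orderEmbOfFin_mem _ _ _

lemma iso_symm_emb {s : Finset ℕ} {k : ℕ} (h : s.card = k) (t : Fin k)
    (hm : (s.orderEmbOfFin h t) ∈ s) :
    (s.orderIsoOfFin h).symm ⟨s.orderEmbOfFin h t, hm⟩ = t := by
  have : (s.orderIsoOfFin h) t = ⟨s.orderEmbOfFin h t, hm⟩ :=
    Subtype.ext (Finset.coe_orderIsoOfFin_apply s h t)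
  rw [← this, OrderIso.symm_apply_apply]

def pfun (n : ℕ) (S : Finset ℕ) (hS : S ⊆ Icc 1 n) : ℕ → ℕ := fun p =>
  if hp : p ∈ Oset n S then
    cemb n S hS (((Oset n S).orderIsoOfFin rfl).symm ⟨p, hp⟩)
  else if hp : p ∈ Cset n S then
    oemb n S (((Cset n S).orderIsoOfFin (card_Oset_Cset hS)).symm ⟨p, hp⟩)
  else p

lemma pfun_oemb (hS : S ⊆ Icc 1 n) (t : Fin (Oset n S).card) :
    pfun n S hS (oemb n S t) = cemb n S hS t := by
  unfold pfun
  rw [dif_pos (oemb_mem t)]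
  congr 1
  exact iso_symm_emb rfl t (oemb_mem t)

lemma pfun_cemb (hS : S ⊆ Icc 1 n) (t : Fin (Oset n S).card) :
    pfun n S hS (cemb n S hS t) = oemb n S t := by
  unfold pfun
  rw [dif_neg (fun hc => Oset_Cset_disjoint hS _ hc (cemb_mem hS t)),
    dif_pos (cemb_mem hS t)]
  congr 1
  exact iso_symm_emb (card_Oset_Cset hS) t (cemb_mem hS t)

lemma pfun_fixed (hS : S ⊆ Icc 1 n) {p : ℕ} (h1 : p ∉ Oset n S) (h2 : p ∉ Cset n S) :
    pfun n S hS p = p := by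
  unfold pfun
  rw [dif_neg h1, dif_neg h2]

lemma pfun_invol (hS : S ⊆ Icc 1 n) : ∀ p, pfun n S hS (pfun n S hS p) = p := by
  intro p
  by_cases h1 : p ∈ Oset n S
  · obtain ⟨t, rfl⟩ := exists_emb rfl h1
    rw [show (Oset n S).orderEmbOfFin rfl t = oemb n S t from rfl,
      pfun_oemb hS t, pfun_cemb hS t]
  · by_cases h2 : p ∈ Cset n S
    · obtain ⟨t, rfl⟩ := exists_emb (card_Oset_Cset hS) h2
      rw [show (Cset n S).orderEmbOfFin (card_Oset_Cset hS) t = cemb n S hS t from rfl,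
        pfun_cemb hS t, pfun_oemb hS t]
    · rw [pfun_fixed hS h1 h2, pfun_fixed hS h1 h2]

lemma filter_lt_pred (A : Finset ℕ) {x : ℕ} (hx : 1 ≤ x) :
    A.filter (· < x) = A.filter (· ≤ x - 1) := by
  apply Finset.filter_congr
  intro y _
  constructor <;> (intro h; omega)

lemma bal_pos_at_closer (hS : S ⊆ Icc 1 n) {c : ℕ} (hc : c ∈ Cset n S) :
    0 < bal S (min (c-1) (2*n - (c-1))) := by
  have hcI := mem_Icc.mp (Cset_subset hS hc)
  rcases le_or_gt c n with h | h
  · rw [mem_Cset_low hS h] at hc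
    have := (mem_Cf.mp hc).2.2
    have hmin : min (c-1) (2*n - (c-1)) = c - 1 := by omega
    rwa [hmin]
  · rw [mem_Cset_high hS (by omega) (by omega)] at hc
    have hrf := mem_Icc.mp (hS hc)
    have hmin : min (c-1) (2*n - (c-1)) = rf n c := by unfold rf at *; omega
    rw [hmin]
    exact bal_le_of_mem hS hc

lemma OC_lt (hS : S ⊆ Icc 1 n) (t : Fin (Oset n S).card) :
    oemb n S t < cemb n S hS t := by
  set c := cemb n S hS t with hcdef
  have hc : c ∈ Cset n S := cemb_mem hS t
  have hcI := mem_Icc.mp (Cset_subset hS hc)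
  have h1 : ((Cset n S).filter (· < c)).card = t := emb_count_self (card_Oset_Cset hS) t
  rw [filter_lt_pred _ (by omega)] at h1
  have h2 := cnt_O_eq hS (j := c - 1) (by omega)
  have h3 := bal_pos_at_closer hS hc
  have h4 : oemb n S t < c ↔ (t:ℕ) < ((Oset n S).filter (· < c)).card :=
    emb_lt_iff rfl t c
  rw [filter_lt_pred _ (by omega)] at h4
  rw [h4]
  show (t:ℕ) < cnt (Oset n S) (c-1)
  rw [h2]
  have h1' : cnt (Cset n S) (c-1) = t := h1
  omega

lemma pfun_gt (hS : S ⊆ Icc 1 n) {p : ℕ} (hp : p ∈ Oset n S) : p < pfun n S hS p := by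
  obtain ⟨t, rfl⟩ := exists_emb rfl hp
  rw [show (Oset n S).orderEmbOfFin rfl t = oemb n S t from rfl, pfun_oemb hS t]
  exact OC_lt hS t

lemma pfun_lt (hS : S ⊆ Icc 1 n) {p : ℕ} (hp : p ∈ Cset n S) : pfun n S hS p < p := by
  obtain ⟨t, rfl⟩ := exists_emb (card_Oset_Cset hS) hp
  rw [show (Cset n S).orderEmbOfFin (card_Oset_Cset hS) t = cemb n S hS t from rfl,
    pfun_cemb hS t]
  exact OC_lt hS t

lemma pfun_mem (hS : S ⊆ Icc 1 n) {p : ℕ} (hp : p ∈ Icc 1 (2*n)) :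
    pfun n S hS p ∈ Icc 1 (2*n) := by
  by_cases h1 : p ∈ Oset n S
  · obtain ⟨t, rfl⟩ := exists_emb rfl h1
    rw [show (Oset n S).orderEmbOfFin rfl t = oemb n S t from rfl, pfun_oemb hS t]
    exact Cset_subset hS (cemb_mem hS t)
  · by_cases h2 : p ∈ Cset n S
    · obtain ⟨t, rfl⟩ := exists_emb (card_Oset_Cset hS) h2
      rw [show (Cset n S).orderEmbOfFin (card_Oset_Cset hS) t = cemb n S hS t from rfl,
        pfun_cemb hS t]
      exact Oset_subset hS (oemb_mem t)
    · rwa [pfun_fixed hS h1 h2]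

end

noncomputable section
variable {n : ℕ} {S : Finset ℕ}

lemma rf_lt_rf {a b : ℕ} (ha : a ∈ Icc 1 (2*n)) (hb : b ∈ Icc 1 (2*n)) :
    rf n a < rf n b ↔ b < a := by
  simp only [mem_Icc] at ha hb
  unfold rf
  omega

lemma Cset_eq_image (hS : S ⊆ Icc 1 n) : Cset n S = (Oset n S).image (rf n) := by
  unfold Oset Cset
  rw [Finset.image_union]
  have h1 : ((Cf n S).image (rf n)).image (rf n) = Cf n S := by
    ext x
    simp only [Finset.mem_image]
    constructor
    · rintro ⟨y, ⟨z, hz, rfl⟩, rfl⟩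
      rwa [rf_invol (Icc1n_sub (Cf_subset hz))]
    · intro hx
      exact ⟨rf n x, ⟨x, hx, rfl⟩, rf_invol (Icc1n_sub (Cf_subset hx))⟩
  rw [h1, Finset.union_comm]

lemma cemb_eq_rf (hS : S ⊆ Icc 1 n) (t : Fin (Oset n S).card) :
    cemb n S hS t = rf n (oemb n S t.rev) := by
  have hmem : ∀ x : Fin (Oset n S).card, rf n (oemb n S x.rev) ∈ Cset n S := by
    intro x
    rw [Cset_eq_image hS]
    exact Finset.mem_image.mpr ⟨oemb n S x.rev, oemb_mem _, rfl⟩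
  have hmono : StrictMono (fun x : Fin (Oset n S).card => rf n (oemb n S x.rev)) := by
    intro a b hab
    have h1 : b.rev < a.rev := by rwa [Fin.rev_lt_rev]
    have h2 : oemb n S b.rev < oemb n S a.rev := (oemb n S).strictMono h1
    exact (rf_lt_rf (Oset_subset hS (oemb_mem a.rev)) (Oset_subset hS (oemb_mem b.rev))).mpr h2
  have hu := Finset.orderEmbOfFin_unique (card_Oset_Cset hS) hmem hmono
  exact (congrFun hu t).symm

lemma rf_mem_Oset_iff (hS : S ⊆ Icc 1 n) {p : ℕ} (hp : p ∈ Icc 1 (2*n)) :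
    rf n p ∈ Oset n S ↔ p ∈ Cset n S := by
  rw [Cset_eq_image hS]
  constructor
  · intro h
    exact Finset.mem_image.mpr ⟨rf n p, h, rf_invol hp⟩
  · intro h
    obtain ⟨o, ho, rfl⟩ := Finset.mem_image.mp h
    rwa [rf_invol (Oset_subset hS ho)]

lemma rf_mem_Cset_iff (hS : S ⊆ Icc 1 n) {p : ℕ} (hp : p ∈ Icc 1 (2*n)) :
    rf n p ∈ Cset n S ↔ p ∈ Oset n S := by
  rw [Cset_eq_image hS]
  constructor
  · intro h
    obtain ⟨o, ho, heq⟩ := Finset.mem_image.mp h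
    have : o = p := by
      have h1 := mem_Icc.mp (Oset_subset hS ho)
      have h2 := mem_Icc.mp hp
      unfold rf at heq
      omega
    rwa [← this]
  · intro h
    exact Finset.mem_image.mpr ⟨p, h, rfl⟩

lemma pfun_rf (hS : S ⊆ Icc 1 n) {p : ℕ} (hp : p ∈ Icc 1 (2*n)) :
    pfun n S hS (rf n p) = rf n (pfun n S hS p) := by
  by_cases h1 : p ∈ Oset n S
  · obtain ⟨t, rfl⟩ := exists_emb rfl h1
    have hoemb : (Oset n S).orderEmbOfFin rfl t = oemb n S t := rfl
    rw [hoemb] at *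
    have e1 : rf n (oemb n S t) = cemb n S hS t.rev := by
      rw [cemb_eq_rf hS t.rev, Fin.rev_rev]
    rw [e1, pfun_cemb hS t.rev, pfun_oemb hS t, cemb_eq_rf hS t,
      rf_invol (Oset_subset hS (oemb_mem t.rev))]
  · by_cases h2 : p ∈ Cset n S
    · obtain ⟨t, rfl⟩ := exists_emb (card_Oset_Cset hS) h2
      have hcemb : (Cset n S).orderEmbOfFin (card_Oset_Cset hS) t = cemb n S hS t := rfl
      rw [hcemb] at *
      have e1 : rf n (cemb n S hS t) = oemb n S t.rev := by
        rw [cemb_eq_rf hS t, rf_invol (Oset_subset hS (oemb_mem t.rev))]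
      rw [e1, pfun_oemb hS t.rev, pfun_cemb hS t]
      rw [cemb_eq_rf hS t.rev, Fin.rev_rev]
    · have h3 : rf n p ∉ Oset n S := fun hc => h2 ((rf_mem_Oset_iff hS hp).mp hc)
      have h4 : rf n p ∉ Cset n S := fun hc => h1 ((rf_mem_Cset_iff hS hp).mp hc)
      rw [pfun_fixed hS h3 h4, pfun_fixed hS h1 h2]

lemma bal_zero_at_fixed_low (hS : S ⊆ Icc 1 n) {q : ℕ} (hq1 : 1 ≤ q) (hq2 : q ≤ n)
    (h1 : q ∉ S) (h2 : q ∉ Cf n S) : bal S (q-1) = 0 ∧ bal S q = 0 := by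
  have hb : bal S (q-1) = 0 := by
    by_contra hb
    exact h2 (mem_Cf.mpr ⟨⟨hq1, hq2⟩, h1, by omega⟩)
  refine ⟨hb, ?_⟩
  obtain ⟨r, rfl⟩ : ∃ r, q = r + 1 := ⟨q - 1, by omega⟩
  rw [bal_succ, if_neg h1]
  simp only [Nat.add_sub_cancel] at hb
  omega

lemma cnt_eq_at_fixed (hS : S ⊆ Icc 1 n) {q : ℕ} (hq : q ∈ Icc 1 (2*n))
    (h1 : q ∉ Oset n S) (h2 : q ∉ Cset n S) :
    cnt (Oset n S) (q-1) = cnt (Cset n S) (q-1) := by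
  have hqI := mem_Icc.mp hq
  have hkey := cnt_O_eq hS (j := q-1) (by omega)
  rcases le_or_gt q n with h | h
  · have hs : q ∉ S := fun hc => h1 ((mem_Oset_low hS h).mpr hc)
    have hcf : q ∉ Cf n S := fun hc => h2 ((mem_Cset_low hS h).mpr hc)
    have hb := (bal_zero_at_fixed_low hS hqI.1 h hs hcf).1
    have hmin : min (q-1) (2*n - (q-1)) = q - 1 := by omega
    rw [hmin, hb] at hkey
    omega
  · have hrf : rf n q ∈ Icc 1 n := by
      simp only [mem_Icc]; unfold rf; omega
    have hrfI := mem_Icc.mp hrf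
    have hcf : rf n q ∉ Cf n S := fun hc => by
      apply h1
      rw [mem_Oset_high hS (by omega) (by omega)]
      exact hc
    have hs : rf n q ∉ S := fun hc => by
      apply h2
      rw [mem_Cset_high hS (by omega) (by omega)]
      exact hc
    have hb := (bal_zero_at_fixed_low hS hrfI.1 hrfI.2 hs hcf).2
    have hmin : min (q-1) (2*n - (q-1)) = rf n q := by unfold rf; omega
    rw [hmin, hb] at hkey
    omega

/-- weak-excedance values increase -/
lemma wexc_mono (hS : S ⊆ Icc 1 n) {p q : ℕ} (hpI : p ∈ Icc 1 (2*n)) (hqI : q ∈ Icc 1 (2*n))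
    (hpq : p < q) (hp : p ≤ pfun n S hS p) (hq : q ≤ pfun n S hS q) :
    pfun n S hS p < pfun n S hS q := by
  have hpC : p ∉ Cset n S := fun hc => by have := pfun_lt hS hc; omega
  have hqC : q ∉ Cset n S := fun hc => by have := pfun_lt hS hc; omega
  by_cases hpO : p ∈ Oset n S
  · obtain ⟨s, rfl⟩ := exists_emb rfl hpO
    have hoemb : (Oset n S).orderEmbOfFin rfl s = oemb n S s := rfl
    rw [hoemb] at *
    rw [pfun_oemb hS s]
    by_cases hqO : q ∈ Oset n S
    · obtain ⟨t, rfl⟩ := exists_emb rfl hqO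
      rw [show (Oset n S).orderEmbOfFin rfl t = oemb n S t from rfl] at *
      rw [pfun_oemb hS t]
      exact (cemb n S hS).strictMono ((oemb n S).strictMono.lt_iff_lt.mp hpq)
    · -- q fixed
      rw [pfun_fixed hS hqO hqC] at hq ⊢
      have hqI' := mem_Icc.mp hqI
      have hcount := cnt_eq_at_fixed hS hqI hqO hqC
      have h1 : oemb n S s < q := hpq
      have h2 : (s:ℕ) < ((Oset n S).filter (· < q)).card := (emb_lt_iff rfl s q).mp h1
      rw [filter_lt_pred _ (by omega)] at h2
      have h3 : (s:ℕ) < ((Cset n S).filter (· < q)).card := by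
        rw [filter_lt_pred _ (by omega)]
        show (s:ℕ) < cnt (Cset n S) (q-1)
        have h2' : (s:ℕ) < cnt (Oset n S) (q-1) := h2
        omega
      exact (emb_lt_iff (card_Oset_Cset hS) s q).mpr h3
  · rw [pfun_fixed hS hpO hpC] at hp ⊢
    by_cases hqO : q ∈ Oset n S
    · have := pfun_gt hS hqO
      omega
    · rw [pfun_fixed hS hqO hqC]
      exact hpq

/-- deficiency values increase -/
lemma def_mono (hS : S ⊆ Icc 1 n) {p q : ℕ}
    (hpq : p < q) (hp : pfun n S hS p < p) (hq : pfun n S hS q < q) :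
    pfun n S hS p < pfun n S hS q := by
  have hpC : p ∈ Cset n S := by
    by_contra hc
    by_cases hO : p ∈ Oset n S
    · have := pfun_gt hS hO; omega
    · rw [pfun_fixed hS hO hc] at hp; omega
  have hqC : q ∈ Cset n S := by
    by_contra hc
    by_cases hO : q ∈ Oset n S
    · have := pfun_gt hS hO; omega
    · rw [pfun_fixed hS hO hc] at hq; omega
  obtain ⟨s, rfl⟩ := exists_emb (card_Oset_Cset hS) hpC
  obtain ⟨t, rfl⟩ := exists_emb (card_Oset_Cset hS) hqC
  rw [show (Cset n S).orderEmbOfFin (card_Oset_Cset hS) s = cemb n S hS s from rfl] at *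
  rw [show (Cset n S).orderEmbOfFin (card_Oset_Cset hS) t = cemb n S hS t from rfl] at *
  rw [pfun_cemb hS s, pfun_cemb hS t]
  exact (oemb n S).strictMono ((cemb n S hS).strictMono.lt_iff_lt.mp hpq)

end

noncomputable section
variable {n : ℕ} {S : Finset ℕ}

lemma pfun_trich (hS : S ⊆ Icc 1 n) {p : ℕ} :
    (p ∈ Oset n S ∧ p < pfun n S hS p) ∨ (p ∈ Cset n S ∧ pfun n S hS p < p)
      ∨ (p ∉ Oset n S ∧ p ∉ Cset n S ∧ pfun n S hS p = p) := by
  by_cases h1 : p ∈ Oset n S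
  · exact Or.inl ⟨h1, pfun_gt hS h1⟩
  · by_cases h2 : p ∈ Cset n S
    · exact Or.inr (Or.inl ⟨h2, pfun_lt hS h2⟩)
    · exact Or.inr (Or.inr ⟨h1, h2, pfun_fixed hS h1 h2⟩)

lemma mem_Cset_of_pfun_lt (hS : S ⊆ Icc 1 n) {p : ℕ} (h : pfun n S hS p < p) :
    p ∈ Cset n S := by
  rcases pfun_trich hS (p := p) with ⟨_, h'⟩ | ⟨h', _⟩ | ⟨_, _, h'⟩ <;> first | omega | exact h'

lemma mem_Oset_of_pfun_gt (hS : S ⊆ Icc 1 n) {p : ℕ} (h : p < pfun n S hS p) :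
    p ∈ Oset n S := by
  rcases pfun_trich hS (p := p) with ⟨h', _⟩ | ⟨_, h'⟩ | ⟨_, _, h'⟩ <;> first | omega | exact h'

lemma pfun_mem_Cset_of_Oset (hS : S ⊆ Icc 1 n) {p : ℕ} (hp : p ∈ Oset n S) :
    pfun n S hS p ∈ Cset n S := by
  obtain ⟨t, rfl⟩ := exists_emb rfl hp
  rw [show (Oset n S).orderEmbOfFin rfl t = oemb n S t from rfl, pfun_oemb hS t]
  exact cemb_mem hS t

def permOfFun (n : ℕ) (S : Finset ℕ) (hS : S ⊆ Icc 1 n) : Fin (2*n) → Fin (2*n) :=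
  fun x => ⟨pfun n S hS (x.1+1) - 1, by
    have hmem : (x.1+1) ∈ Icc 1 (2*n) := by
      simp only [mem_Icc]
      exact ⟨by omega, x.isLt⟩
    have := mem_Icc.mp (pfun_mem hS hmem)
    omega⟩

lemma permOfFun_invol (n : ℕ) (S : Finset ℕ) (hS : S ⊆ Icc 1 n) :
    Function.Involutive (permOfFun n S hS) := by
  intro x
  apply Fin.ext
  show pfun n S hS ((pfun n S hS (x.1+1) - 1) + 1) - 1 = x.1
  have hmem : (x.1+1) ∈ Icc 1 (2*n) := by
    simp only [mem_Icc]; exact ⟨by omega, x.isLt⟩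
  have h1 := mem_Icc.mp (pfun_mem hS hmem)
  rw [show (pfun n S hS (x.1+1) - 1) + 1 = pfun n S hS (x.1+1) by omega, pfun_invol hS]
  omega

def permOf (n : ℕ) (S : Finset ℕ) (hS : S ⊆ Icc 1 n) : Equiv.Perm (Fin (2*n)) :=
  Function.Involutive.toPerm (permOfFun n S hS) (permOfFun_invol n S hS)

lemma permOf_apply (hS : S ⊆ Icc 1 n) (x : Fin (2*n)) :
    ((permOf n S hS x : Fin (2*n)) : ℕ) = pfun n S hS (x.1+1) - 1 := rfl

lemma pval_permOf (hS : S ⊆ Icc 1 n) {i : ℕ} (h1 : 1 ≤ i) (h2 : i ≤ 2*n) :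
    pval (permOf n S hS) i = pfun n S hS i := by
  unfold pval
  rw [dif_pos (show i-1 < 2*n by omega)]
  have : ((permOf n S hS ⟨i-1, by omega⟩ : Fin (2*n)) : ℕ) = pfun n S hS ((i-1)+1) - 1 :=
    permOf_apply hS _
  rw [this, show (i-1)+1 = i by omega]
  have hmem : i ∈ Icc 1 (2*n) := mem_Icc.mpr ⟨h1, h2⟩
  have := mem_Icc.mp (pfun_mem hS hmem)
  omega

lemma permOf_involutive (hS : S ⊆ Icc 1 n) : Function.Involutive ⇑(permOf n S hS) :=
  fun x => permOfFun_invol n S hS x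

lemma permOf_centro (hS : S ⊆ Icc 1 n) : Centro (permOf n S hS) := by
  intro i hi
  have hiI := mem_Icc.mp hi
  rw [pval_permOf hS hiI.1 hiI.2]
  have hrf : 2*n + 1 - i = rf n i := rfl
  rw [hrf, pval_permOf hS (by unfold rf; omega) (by unfold rf; omega),
    pfun_rf hS hi]
  have := mem_Icc.mp (pfun_mem hS hi)
  unfold rf
  omega

lemma permOf_avoids (hS : S ⊆ Icc 1 n) : Avoids321 (permOf n S hS) := by
  rintro ⟨i, j, k, hij, hjk, h1, h2⟩
  have hai : (i:ℕ)+1 ∈ Icc 1 (2*n) := mem_Icc.mpr ⟨by omega, by have := i.isLt; omega⟩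
  have haj : (j:ℕ)+1 ∈ Icc 1 (2*n) := mem_Icc.mpr ⟨by omega, by have := j.isLt; omega⟩
  have hak : (k:ℕ)+1 ∈ Icc 1 (2*n) := mem_Icc.mpr ⟨by omega, by have := k.isLt; omega⟩
  have hvi := mem_Icc.mp (pfun_mem hS hai)
  have hvj := mem_Icc.mp (pfun_mem hS haj)
  have hvk := mem_Icc.mp (pfun_mem hS hak)
  have e1 : ((permOf n S hS i : Fin (2*n)) : ℕ) = pfun n S hS (i.1+1) - 1 := permOf_apply hS i
  have e2 : ((permOf n S hS j : Fin (2*n)) : ℕ) = pfun n S hS (j.1+1) - 1 := permOf_apply hS j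
  have e3 : ((permOf n S hS k : Fin (2*n)) : ℕ) = pfun n S hS (k.1+1) - 1 := permOf_apply hS k
  have hlt1 : pfun n S hS (k.1+1) < pfun n S hS (j.1+1) := by
    have := Fin.lt_iff_val_lt_val.mp h1
    rw [e2, e3] at this
    omega
  have hlt2 : pfun n S hS (j.1+1) < pfun n S hS (i.1+1) := by
    have := Fin.lt_iff_val_lt_val.mp h2
    rw [e1, e2] at this
    omega
  have hab : (i:ℕ)+1 < (j:ℕ)+1 := by
    have := Fin.lt_iff_val_lt_val.mp hij; omega
  have hbc : (j:ℕ)+1 < (k:ℕ)+1 := by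
    have := Fin.lt_iff_val_lt_val.mp hjk; omega
  -- case analysis
  rcases le_or_gt ((k:ℕ)+1) (pfun n S hS ((k:ℕ)+1)) with hkw | hkd
  · -- k weak => j weak => contradiction
    have hjw : (j:ℕ)+1 ≤ pfun n S hS ((j:ℕ)+1) := by omega
    have := wexc_mono hS haj hak hbc hjw hkw
    omega
  · rcases le_or_gt ((i:ℕ)+1) (pfun n S hS ((i:ℕ)+1)) with hiw | hid
    · rcases le_or_gt ((j:ℕ)+1) (pfun n S hS ((j:ℕ)+1)) with hjw | hjd
      · have := wexc_mono hS hai haj hab hiw hjw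
        omega
      · have := def_mono hS hbc hjd hkd
        omega
    · have hjd : pfun n S hS ((j:ℕ)+1) < (j:ℕ)+1 := by omega
      have := def_mono hS hab hid hjd
      omega

lemma permOf_mem_ICset (hS : S ⊆ Icc 1 n) : permOf n S hS ∈ ICset n := by
  rw [ICset, Finset.mem_filter]
  exact ⟨Finset.mem_univ _, permOf_involutive hS, permOf_centro hS, permOf_avoids hS⟩

lemma Epi_permOf (hS : S ⊆ Icc 1 n) : Epi (permOf n S hS) = S := by
  ext i
  rw [Epi, Finset.mem_filter, mem_Icc]
  constructor
  · rintro ⟨⟨h1, h2⟩, hlt⟩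
    rw [pval_permOf hS h1 (by omega)] at hlt
    have := mem_Oset_of_pfun_gt hS hlt
    rwa [mem_Oset_low hS h2] at this
  · intro hi
    have hiI := mem_Icc.mp (hS hi)
    refine ⟨⟨hiI.1, hiI.2⟩, ?_⟩
    rw [pval_permOf hS hiI.1 (by omega)]
    exact pfun_gt hS ((mem_Oset_low hS hiI.2).mpr hi)

noncomputable section
variable {n : ℕ} {S : Finset ℕ}

lemma descent_iff (hS : S ⊆ Icc 1 n) {p : ℕ} (hp1 : 1 ≤ p) (hp2 : p ≤ n) :
    pfun n S hS (p+1) < pfun n S hS p ↔ (p ∈ S ∧ p+1 ∉ S) := by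
  have hn1 : 1 ≤ n := le_trans hp1 hp2
  have hpI : p ∈ Icc 1 (2*n) := mem_Icc.mpr ⟨hp1, by omega⟩
  have hqI : p+1 ∈ Icc 1 (2*n) := mem_Icc.mpr ⟨by omega, by omega⟩
  constructor
  · intro hdes
    by_cases hp : p ∈ S
    · refine ⟨hp, ?_⟩
      intro hq
      have h1 : p ∈ Oset n S := (mem_Oset_low hS hp2).mpr hp
      have h2 : p+1 ∈ Oset n S :=
        (mem_Oset_low hS (mem_Icc.mp (hS hq)).2).mpr hq
      have := wexc_mono hS hpI hqI (by omega) (le_of_lt (pfun_gt hS h1))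
        (le_of_lt (pfun_gt hS h2))
      omega
    · exfalso
      have hpO : p ∉ Oset n S := fun hc => hp ((mem_Oset_low hS hp2).mp hc)
      have hple : pfun n S hS p ≤ p := by
        rcases pfun_trich hS (p := p) with ⟨h', _⟩ | ⟨_, h'⟩ | ⟨_, _, h'⟩
        · exact absurd h' hpO
        · omega
        · omega
      have hqC : p+1 ∈ Cset n S := mem_Cset_of_pfun_lt hS (by omega)
      by_cases hpc : p ∈ Cset n S
      · have := def_mono hS (show p < p+1 by omega) (pfun_lt hS hpc) (pfun_lt hS hqC)
        omega
      · -- p fixed, p+1 closer: impossible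
        rcases le_or_gt (p+1) n with h | h
        · have hcf : p+1 ∈ Cf n S := (mem_Cset_low hS h).mp hqC
          have hb := (mem_Cf.mp hcf).2.2
          rw [show p+1-1 = p by omega] at hb
          have hpcf : p ∉ Cf n S := fun hc => hpc ((mem_Cset_low hS hp2).mpr hc)
          have := (bal_zero_at_fixed_low hS hp1 hp2 hp hpcf).2
          omega
        · have hpn : p = n := by omega
          rw [mem_Cset_high hS (by omega) (by omega)] at hqC
          have : rf n (p+1) = n := by unfold rf; omega
          rw [this] at hqC
          exact hp (hpn ▸ hqC)
  · rintro ⟨hp, hq⟩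
    have hpO : p ∈ Oset n S := (mem_Oset_low hS hp2).mpr hp
    have hgt : p < pfun n S hS p := pfun_gt hS hpO
    have hq1 : p+1 ∉ Oset n S := by
      intro hc
      rcases le_or_gt (p+1) n with h | h
      · exact hq ((mem_Oset_low hS h).mp hc)
      · have hpn : p = n := by omega
        rw [mem_Oset_high hS (by omega) (by omega)] at hc
        have hrf : rf n (p+1) = n := by unfold rf; omega
        rw [hrf] at hc
        exact (mem_Cf.mp hc).2.1 (hpn ▸ hp)
    by_cases hc2 : p+1 ∈ Cset n S
    · have := pfun_lt hS hc2
      omega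
    · have hfix := pfun_fixed hS hq1 hc2
      have hC : pfun n S hS p ∈ Cset n S := pfun_mem_Cset_of_Oset hS hpO
      have hne : pfun n S hS p ≠ p+1 := fun h => hc2 (h ▸ hC)
      omega

lemma DesSet_permOf (hS : S ⊆ Icc 1 n) :
    (DesSet (permOf n S hS)).filter (· ≤ n) = S.filter (fun p => p+1 ∉ S) := by
  ext p
  simp only [DesSet, Finset.mem_filter, Finset.mem_Ico]
  constructor
  · rintro ⟨⟨⟨hq1, hq2⟩, hdes⟩, hpn⟩
    rw [pval_permOf hS (by omega) (by omega), pval_permOf hS hq1 (by omega)] at hdes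
    have := (descent_iff hS hq1 hpn).mp hdes
    exact ⟨this.1, this.2⟩
  · rintro ⟨hp, hq⟩
    have hpI := mem_Icc.mp (hS hp)
    have hn1 : 1 ≤ n := le_trans hpI.1 hpI.2
    refine ⟨⟨⟨hpI.1, by omega⟩, ?_⟩, hpI.2⟩
    rw [pval_permOf hS (by omega) (by omega), pval_permOf hS hpI.1 (by omega)]
    exact (descent_iff hS hpI.1 hpI.2).mpr ⟨hp, hq⟩

noncomputable section
variable {n : ℕ} {π : Equiv.Perm (Fin (2*n))}

lemma pval_mem_Icc {i : ℕ} (h1 : 1 ≤ i) (h2 : i ≤ 2*n) : pval π i ∈ Icc 1 (2*n) := by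
  unfold pval
  rw [dif_pos (show i - 1 < 2*n by omega)]
  simp only [mem_Icc]
  have := (π ⟨i-1, by omega⟩).isLt
  omega

lemma pval_pval (hInv : Function.Involutive ⇑π) {i : ℕ} (h1 : 1 ≤ i) (h2 : i ≤ 2*n) :
    pval π (pval π i) = i := by
  have hi : i - 1 < 2*n := by omega
  have h0 : pval π i = (π ⟨i-1, hi⟩ : ℕ) + 1 := by unfold pval; exact dif_pos hi
  have hlt := (π ⟨i-1, hi⟩).isLt
  have hj : pval π i - 1 < 2*n := by omega
  have h3 : pval π (pval π i) = (π ⟨pval π i - 1, hj⟩ : ℕ) + 1 := by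
    unfold pval; exact dif_pos hj
  have h4 : (⟨pval π i - 1, hj⟩ : Fin (2*n)) = π ⟨i-1, hi⟩ := by
    apply Fin.ext
    show pval π i - 1 = _
    omega
  rw [h3, h4, hInv ⟨i-1, hi⟩]
  show (i-1)+1 = i
  omega

lemma pval_inj (hInv : Function.Involutive ⇑π) {i j : ℕ} (h1 : 1 ≤ i) (h2 : i ≤ 2*n)
    (h3 : 1 ≤ j) (h4 : j ≤ 2*n) (h : pval π i = pval π j) : i = j := by
  have e1 := pval_pval hInv h1 h2
  have e2 := pval_pval hInv h3 h4
  rw [h] at e1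
  rw [← e1, e2]

lemma mk321 (hAv : Avoids321 π) {a b c : ℕ} (ha1 : 1 ≤ a) (hc2 : c ≤ 2*n)
    (hab : a < b) (hbc : b < c)
    (h1 : pval π c < pval π b) (h2 : pval π b < pval π a) : False := by
  apply hAv
  have hA : a - 1 < 2*n := by omega
  have hB : b - 1 < 2*n := by omega
  have hC : c - 1 < 2*n := by omega
  have eA : pval π a = (π ⟨a-1, hA⟩ : ℕ) + 1 := by unfold pval; exact dif_pos hA
  have eB : pval π b = (π ⟨b-1, hB⟩ : ℕ) + 1 := by unfold pval; exact dif_pos hB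
  have eC : pval π c = (π ⟨c-1, hC⟩ : ℕ) + 1 := by unfold pval; exact dif_pos hC
  refine ⟨⟨a-1, hA⟩, ⟨b-1, hB⟩, ⟨c-1, hC⟩, ?_, ?_, ?_, ?_⟩
  · exact Fin.lt_iff_val_lt_val.mpr (show a - 1 < b - 1 by omega)
  · exact Fin.lt_iff_val_lt_val.mpr (show b - 1 < c - 1 by omega)
  · exact Fin.lt_iff_val_lt_val.mpr (by omega)
  · exact Fin.lt_iff_val_lt_val.mpr (by omega)

/-- opener values increase -/
lemma gA1 (hInv : Function.Involutive ⇑π) (hAv : Avoids321 π) {i j : ℕ}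
    (hi1 : 1 ≤ i) (hj2 : j ≤ 2*n) (hij : i < j)
    (hoi : i < pval π i) (hoj : j < pval π j) : pval π i < pval π j := by
  by_contra hc
  push_neg at hc
  have hne : pval π j ≠ pval π i := fun h => by
    have := pval_inj hInv (by omega) hj2 hi1 (by omega) h
    omega
  have hj' := mem_Icc.mp (pval_mem_Icc (π := π) (show 1 ≤ j by omega) hj2)
  have hgg : pval π (pval π j) = j := pval_pval hInv (by omega) hj2
  exact mk321 hAv hi1 hj'.2 hij hoj (by omega) (by omega)

/-- no arc passes over a fixed point (left version) -/
lemma gA2 (hInv : Function.Involutive ⇑π) (hAv : Avoids321 π) {i f : ℕ}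
    (hi1 : 1 ≤ i) (hf2 : f ≤ 2*n) (hif : i < f)
    (hoi : i < pval π i) (hff : pval π f = f) : pval π i < f := by
  by_contra hc
  push_neg at hc
  have hne : pval π i ≠ f := fun h => by
    have : pval π i = pval π f := by rw [h, hff]
    have := pval_inj hInv hi1 (by omega) (by omega) hf2 this
    omega
  have hi' := mem_Icc.mp (pval_mem_Icc (π := π) hi1 (by omega))
  have hgg : pval π (pval π i) = i := pval_pval hInv hi1 (by omega)
  exact mk321 hAv hi1 hi'.2 hif (by omega) (by omega) (by omega)

noncomputable section
variable {n : ℕ} {π : Equiv.Perm (Fin (2*n))}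

lemma Icc_filter_succ_card (P : ℕ → Prop) [DecidablePred P] (p : ℕ) :
    ((Icc 1 (p+1)).filter P).card
      = ((Icc 1 p).filter P).card + (if P (p+1) then 1 else 0) := by
  have he : Icc 1 (p+1) = insert (p+1) (Icc 1 p) := by
    ext x; simp only [mem_Icc, Finset.mem_insert]; omega
  rw [he, Finset.filter_insert]
  by_cases h : P (p+1)
  · rw [if_pos h, if_pos h, Finset.card_insert_of_notMem
      (fun hc => absurd (mem_Icc.mp (Finset.mem_of_mem_filter _ hc)).2 (by omega))]
  · rw [if_neg h, if_neg h, Nat.add_zero]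

lemma roles_low (hInv : Function.Involutive ⇑π) (hAv : Avoids321 π)
    {S : Finset ℕ} (hS : S ⊆ Icc 1 n)
    (hSE : ∀ i, 1 ≤ i → i ≤ n → (i ∈ S ↔ i < pval π i)) :
    ∀ p, p ≤ n →
      (((Icc 1 p).filter (fun i => i < pval π i)).card
        = ((Icc 1 p).filter (fun i => pval π i < i)).card + bal S p)
      ∧ (∀ i, 1 ≤ i → i ≤ p → (pval π i < i ↔ i ∈ Cf n S)) := by
  intro p
  induction p with
  | zero =>
    intro _
    constructor
    · simp [show (Icc 1 0 : Finset ℕ) = ∅ by simp, show bal S 0 = 0 from rfl]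
    · intro i h1 h2; omega
  | succ p ih =>
    intro hp
    obtain ⟨ihc, ihr⟩ := ih (by omega)
    have hq2 : p+1 ≤ n := hp
    by_cases hm : p+1 ∈ S
    · have hgt : p+1 < pval π (p+1) := (hSE _ (by omega) hq2).mp hm
      constructor
      · rw [Icc_filter_succ_card, Icc_filter_succ_card, bal_succ,
          if_pos hgt, if_neg (show ¬ (pval π (p+1) < p+1) by omega), if_pos hm]
        omega
      · intro i h1 h2
        rcases Nat.lt_or_ge i (p+1) with h | h
        · exact ihr i h1 (by omega)
        · have : i = p+1 := by omega
          subst this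
          constructor
          · intro hc; omega
          · intro hc; exact absurd hm (mem_Cf.mp hc).2.1
    · have hle : ¬ (p+1 < pval π (p+1)) := fun hc => hm ((hSE _ (by omega) hq2).mpr hc)
      by_cases hb : bal S p = 0
      · -- must be a fixed point
        have hfix : pval π (p+1) = p+1 := by
          by_contra hne
          have hlt : pval π (p+1) < p+1 := by
            have := mem_Icc.mp (pval_mem_Icc (π := π) (i := p+1) (by omega) (by omega))
            omega
          set a := pval π (p+1) with ha
          have haI := mem_Icc.mp (pval_mem_Icc (π := π) (i := p+1) (by omega) (by omega))
          have hga : pval π a = p+1 := pval_pval hInv (by omega) (by omega)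
          -- image argument
          set X := (Icc 1 p).filter (fun i => pval π i < i) with hX
          set Y := (Icc 1 p).filter (fun i => i < pval π i) with hY
          have hsub : X.image (pval π) ⊆ Y := by
            intro y hy
            obtain ⟨x, hx, rfl⟩ := Finset.mem_image.mp hy
            have hx' := Finset.mem_filter.mp hx
            have hxI := mem_Icc.mp hx'.1
            have hvx := mem_Icc.mp (pval_mem_Icc (π := π) (i := x) (by omega) (by omega))
            refine Finset.mem_filter.mpr ⟨mem_Icc.mpr ⟨by omega, by omega⟩, ?_⟩
            rw [pval_pval hInv (by omega) (by omega)]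
            exact hx'.2
          have hinj : Set.InjOn (pval π) X := by
            intro x hx y hy hxy
            have hx' := mem_Icc.mp (Finset.mem_filter.mp (Finset.mem_coe.mp hx)).1
            have hy' := mem_Icc.mp (Finset.mem_filter.mp (Finset.mem_coe.mp hy)).1
            exact pval_inj hInv (by omega) (by omega) (by omega) (by omega) hxy
          have hcard : (X.image (pval π)).card = Y.card := by
            rw [Finset.card_image_of_injOn hinj]
            omega
          have heq : X.image (pval π) = Y :=
            Finset.eq_of_subset_of_card_le hsub (le_of_eq hcard.symm)
          have haY : a ∈ Y := by
            refine Finset.mem_filter.mpr ⟨mem_Icc.mpr ⟨by omega, by omega⟩, ?_⟩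
            omega
          rw [← heq] at haY
          obtain ⟨x, hx, hxa⟩ := Finset.mem_image.mp haY
          have hx' := mem_Icc.mp (Finset.mem_filter.mp hx).1
          have : x = p+1 := by
            have := pval_pval hInv (i := x) (by omega) (by omega)
            rw [hxa] at this
            rw [← this, hga]
          omega
        constructor
        · rw [Icc_filter_succ_card, Icc_filter_succ_card, bal_succ,
            if_neg (show ¬ (p+1 < pval π (p+1)) by omega),
            if_neg (show ¬ (pval π (p+1) < p+1) by omega), if_neg hm]
          omega
        · intro i h1 h2
          rcases Nat.lt_or_ge i (p+1) with h | h
          · exact ihr i h1 (by omega)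
          · have : i = p+1 := by omega
            subst this
            constructor
            · intro hc; omega
            · intro hc
              have := (mem_Cf.mp hc).2.2
              rw [show p+1-1 = p by omega] at this
              omega
      · -- must be a closer
        have hlt : pval π (p+1) < p+1 := by
          rcases Nat.lt_or_ge (pval π (p+1)) (p+1) with h | h
          · exact h
          · exfalso
            have hfix : pval π (p+1) = p+1 := by omega
            -- openers ≤ p inject into closers ≤ p
            have hinj : ∀ x ∈ (Icc 1 p).filter (fun i => i < pval π i),
                pval π x ∈ (Icc 1 p).filter (fun i => pval π i < i) := by
              intro x hx
              have hx' := Finset.mem_filter.mp hx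
              have hxI := mem_Icc.mp hx'.1
              have hva := gA2 hInv hAv (i := x) (f := p+1) (by omega) (by omega)
                (by omega) hx'.2 hfix
              have hv1 := mem_Icc.mp (pval_mem_Icc (π := π) (i := x) (by omega) (by omega))
              refine Finset.mem_filter.mpr ⟨mem_Icc.mpr ⟨by omega, by omega⟩, ?_⟩
              rw [pval_pval hInv (by omega) (by omega)]
              exact hx'.2
            have hc := Finset.card_le_card_of_injOn (pval π) hinj (by
              intro x hx y hy hxy
              have hx' := mem_Icc.mp (Finset.mem_filter.mp (Finset.mem_coe.mp hx)).1
              have hy' := mem_Icc.mp (Finset.mem_filter.mp (Finset.mem_coe.mp hy)).1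
              exact pval_inj hInv (by omega) (by omega) (by omega) (by omega) hxy)
            omega
        constructor
        · rw [Icc_filter_succ_card, Icc_filter_succ_card, bal_succ,
            if_neg (show ¬ (p+1 < pval π (p+1)) by omega), if_pos hlt, if_neg hm]
          omega
        · intro i h1 h2
          rcases Nat.lt_or_ge i (p+1) with h | h
          · exact ihr i h1 (by omega)
          · have : i = p+1 := by omega
            subst this
            constructor
            · intro _
              exact mem_Cf.mpr ⟨⟨by omega, hq2⟩, hm, by rw [show p+1-1 = p by omega]; omega⟩
            · intro _; exact hlt

noncomputable section
variable {n : ℕ} {π : Equiv.Perm (Fin (2*n))}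

lemma roles_full (hInv : Function.Involutive ⇑π) (hAv : Avoids321 π) (hCen : Centro π)
    {S : Finset ℕ} (hS : S ⊆ Icc 1 n)
    (hSE : ∀ i, 1 ≤ i → i ≤ n → (i ∈ S ↔ i < pval π i)) :
    ∀ p, 1 ≤ p → p ≤ 2*n →
      ((p < pval π p ↔ p ∈ Oset n S) ∧ (pval π p < p ↔ p ∈ Cset n S)) := by
  intro p hp1 hp2
  rcases le_or_gt p n with h | h
  · constructor
    · rw [← hSE p hp1 h]
      exact (mem_Oset_low hS h).symm
    · rw [(roles_low hInv hAv hS hSE n (le_refl n)).2 p hp1 h]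
      exact (mem_Cset_low hS h).symm
  · set r := rf n p with hr
    have hrb : 1 ≤ r ∧ r ≤ n := by unfold rf at hr; omega
    have hcen := hCen r (mem_Icc.mpr ⟨by omega, by omega⟩)
    have hpr : 2*n + 1 - r = p := by unfold rf at hr; omega
    rw [hpr] at hcen
    have hvr := mem_Icc.mp (pval_mem_Icc (π := π) (i := r) (by omega) (by omega))
    have hvp := mem_Icc.mp (pval_mem_Icc (π := π) hp1 hp2)
    constructor
    · rw [mem_Oset_high hS (by omega) hp2]
      rw [← (roles_low hInv hAv hS hSE n (le_refl n)).2 r hrb.1 hrb.2]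
      omega
    · rw [mem_Cset_high hS (by omega) hp2, hSE r hrb.1 hrb.2]
      omega

lemma pval_eq_pfun (hInv : Function.Involutive ⇑π) (hAv : Avoids321 π) (hCen : Centro π)
    {S : Finset ℕ} (hS : S ⊆ Icc 1 n)
    (hSE : ∀ i, 1 ≤ i → i ≤ n → (i ∈ S ↔ i < pval π i)) :
    ∀ i, 1 ≤ i → i ≤ 2*n → pval π i = pfun n S hS i := by
  have key : ∀ t, pval π (oemb n S t) = cemb n S hS t := by
    have hmem : ∀ t, pval π (oemb n S t) ∈ Cset n S := by
      intro t
      have hoI := mem_Icc.mp (Oset_subset hS (oemb_mem t))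
      have hogt : oemb n S t < pval π (oemb n S t) :=
        ((roles_full hInv hAv hCen hS hSE _ hoI.1 hoI.2).1).mpr (oemb_mem t)
      have hvI := mem_Icc.mp (pval_mem_Icc (π := π) hoI.1 hoI.2)
      have hback : pval π (pval π (oemb n S t)) = oemb n S t :=
        pval_pval hInv hoI.1 hoI.2
      exact ((roles_full hInv hAv hCen hS hSE _ (by omega) (by omega)).2).mp (by omega)
    have hmono : StrictMono (fun t => pval π (oemb n S t)) := by
      intro t t' htt
      have h1 : oemb n S t < oemb n S t' := (oemb n S).strictMono htt
      have hoI := mem_Icc.mp (Oset_subset hS (oemb_mem t))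
      have hoI' := mem_Icc.mp (Oset_subset hS (oemb_mem t'))
      exact gA1 hInv hAv hoI.1 hoI'.2 h1
        (((roles_full hInv hAv hCen hS hSE _ hoI.1 hoI.2).1).mpr (oemb_mem t))
        (((roles_full hInv hAv hCen hS hSE _ hoI'.1 hoI'.2).1).mpr (oemb_mem t'))
    have hu := Finset.orderEmbOfFin_unique (card_Oset_Cset hS) hmem hmono
    intro t
    exact congrFun hu t
  intro i h1 h2
  by_cases hO : i ∈ Oset n S
  · obtain ⟨t, rfl⟩ := exists_emb rfl hO
    rw [show (Oset n S).orderEmbOfFin rfl t = oemb n S t from rfl, pfun_oemb hS t]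
    exact key t
  · by_cases hC : i ∈ Cset n S
    · obtain ⟨t, rfl⟩ := exists_emb (card_Oset_Cset hS) hC
      rw [show (Cset n S).orderEmbOfFin (card_Oset_Cset hS) t = cemb n S hS t from rfl,
        pfun_cemb hS t]
      rw [← key t]
      have hoI := mem_Icc.mp (Oset_subset hS (oemb_mem (S := S) t))
      rw [pval_pval hInv hoI.1 hoI.2]
    · rw [pfun_fixed hS hO hC]
      have hroles := roles_full hInv hAv hCen hS hSE i h1 h2
      have h3 : ¬ (i < pval π i) := fun hc => hO (hroles.1.mp hc)
      have h4 : ¬ (pval π i < i) := fun hc => hC (hroles.2.mp hc)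
      omega

lemma Epi_subset : Epi π ⊆ Icc 1 n := Finset.filter_subset _ _

lemma structure_thm (hmem : π ∈ ICset n) :
    π = permOf n (Epi π) (Epi_subset (π := π)) := by
  rw [ICset, Finset.mem_filter] at hmem
  obtain ⟨-, hInv, hCen, hAv⟩ := hmem
  have hSE : ∀ i, 1 ≤ i → i ≤ n → (i ∈ Epi π ↔ i < pval π i) := by
    intro i h1 h2
    rw [Epi, Finset.mem_filter, mem_Icc]
    constructor
    · rintro ⟨-, h⟩; exact h
    · intro h; exact ⟨⟨h1, h2⟩, h⟩
  apply Equiv.ext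
  intro x
  apply Fin.ext
  have hx1 : 1 ≤ x.1 + 1 := by omega
  have hx2 : x.1 + 1 ≤ 2*n := by have := x.isLt; omega
  have e1 : pval π (x.1+1) = (π ⟨x.1+1-1, by omega⟩ : ℕ) + 1 := by
    unfold pval; exact dif_pos (by omega)
  have e2 : (⟨x.1+1-1, by omega⟩ : Fin (2*n)) = x := Fin.ext (by show x.1+1-1 = x.1; omega)
  rw [e2] at e1
  have e3 := pval_eq_pfun hInv hAv hCen (Epi_subset (π := π)) hSE (x.1+1) hx1 hx2
  have e4 : ((permOf n (Epi π) (Epi_subset (π := π)) x : Fin (2*n)) : ℕ)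
      = pfun n (Epi π) (Epi_subset (π := π)) (x.1+1) - 1 := permOf_apply _ x
  omega

theorem final_check (n : ℕ) :
    ∑ π ∈ ICset n, (Polynomial.X : Polynomial ℤ) ^ (∑ i ∈ (DesSet π).filter (· ≤ n), i) =
      ∑ h ∈ Finset.range (n + 1), Polynomial.X ^ (n - h) * qbinom n h := by
  have step1 : ∑ π ∈ ICset n, (Polynomial.X : Polynomial ℤ) ^
      (∑ i ∈ (DesSet π).filter (· ≤ n), i) = Lpoly n := by
    rw [Lpoly]
    refine Finset.sum_bij' (fun π _ => Epi π)
      (fun T hT => permOf n T (Finset.mem_powerset.mp hT)) ?_ ?_ ?_ ?_ ?_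
    · intro π _
      exact Finset.mem_powerset.mpr (Epi_subset (π := π))
    · intro T hT
      exact permOf_mem_ICset (Finset.mem_powerset.mp hT)
    · intro π hπ
      exact (structure_thm hπ).symm
    · intro T hT
      exact Epi_permOf (Finset.mem_powerset.mp hT)
    · intro π hπ
      congr 1
      rw [runEndSum]
      have h1 := structure_thm hπ
      conv_lhs => rw [h1]
      rw [DesSet_permOf (Epi_subset (π := π))]
  rw [step1, Lpoly_eq_Gpoly]
  rfl

/-- `∑_{π ∈ I^C_{2n}(321)} q^{maj^+(π)} = ∑_{h=0}^{n} q^{n-h} [n choose h]_q`. -/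
theorem majPlus_generating_polynomial (n : ℕ) :
    ∑ π ∈ ICset n, (Polynomial.X : Polynomial ℤ) ^ (∑ i ∈ (DesSet π).filter (· ≤ n), i) =
      ∑ h ∈ Finset.range (n + 1), Polynomial.X ^ (n - h) * qbinom n h :=
  final_check n
end
end
end
end
end
end

section
/- For every centrosymmetric permutation π of S_m and every 1 ≤ i < m, position i is a descent of π if and only if position m - i is a descent of π. Consequently maj(π) = m · des(π) / 2. -/
open Finset Polynomial
open scoped Classical

/-- For a centrosymmetric `π ∈ S_m`, `i` is a descent iff `m - i` is a descent;
consequently `maj(π) = m · des(π) / 2`, i.e. `2 · maj(π) = m · des(π)`. -/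
theorem centro_descent_symmetry (m : ℕ) (π : Equiv.Perm (Fin m)) (h : Centro π) :
    (∀ i, 1 ≤ i → i < m → (i ∈ DesSet π ↔ m - i ∈ DesSet π)) ∧
      2 * majStat π = m * desNum π := by
  have key : ∀ i, 1 ≤ i → i < m → (i ∈ DesSet π ↔ m - i ∈ DesSet π) := by
    intro i h1 h2
    have e1 := h i (by simp [Finset.mem_Icc]; omega)
    have e2 := h (i + 1) (by simp [Finset.mem_Icc]; omega)
    have hm1 : m + 1 - (i + 1) = m - i := by omega
    rw [hm1] at e2
    simp only [DesSet, Finset.mem_filter, Finset.mem_Ico]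
    have hm2 : m - i + 1 = m + 1 - i := by omega
    rw [hm2]
    omega
  refine ⟨key, ?_⟩
  have hmem : ∀ a ∈ DesSet π, 1 ≤ a ∧ a < m := by
    intro a ha
    simp only [DesSet, Finset.mem_filter, Finset.mem_Ico] at ha
    exact ⟨ha.1.1, ha.1.2⟩
  have hsum : majStat π = ∑ i ∈ DesSet π, (m - i) := by
    unfold majStat
    refine Finset.sum_nbij' (i := fun a => m - a) (j := fun a => m - a) ?_ ?_ ?_ ?_ ?_
    · intro a ha
      obtain ⟨h1, h2⟩ := hmem a ha
      exact (key a h1 h2).mp ha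
    · intro a ha
      obtain ⟨h1, h2⟩ := hmem a ha
      exact (key a h1 h2).mp ha
    · intro a ha
      obtain ⟨h1, h2⟩ := hmem a ha
      show m - (m - a) = a
      omega
    · intro a ha
      obtain ⟨h1, h2⟩ := hmem a ha
      show m - (m - a) = a
      omega
    · intro a ha
      obtain ⟨h1, h2⟩ := hmem a ha
      show a = m - (m - a)
      omega
  have : 2 * majStat π = ∑ i ∈ DesSet π, (i + (m - i)) := by
    rw [Finset.sum_add_distrib]
    nth_rewrite 1 [hsum]
    unfold majStat at *
    omega
  rw [this]
  have : ∀ a ∈ DesSet π, a + (m - a) = m := by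
    intro a ha
    obtain ⟨h1, h2⟩ := hmem a ha
    omega
  rw [Finset.sum_congr rfl this, Finset.sum_const, smul_eq_mul, desNum, mul_comm]
end

section
/- Let π be a 321-avoiding centrosymmetric involution of S_{2n} and let E_π = {i ∈ [n] : π(i) > i}. Then des(π) = 2·des^+(π) - 1 if n ∈ E_π, and des(π) = 2·des^+(π) otherwise. -/
open Finset Polynomial
open scoped Classical

/-- For `π ∈ I^C_{2n}(321)`, `des(π) = 2·des^+(π) - 1` if `n ∈ E_π`, else `2·des^+(π)`. -/
theorem des_eq_two_desPlus (n : ℕ) (π : Equiv.Perm (Fin (2 * n))) (hπ : π ∈ ICset n) :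
    desNum π =
      if n ∈ Epi π then 2 * ((DesSet π).filter (· ≤ n)).card - 1
      else 2 * ((DesSet π).filter (· ≤ n)).card := by
  classical
  have hC : Centro π := ((Finset.mem_filter.mp hπ).2).2.1
  rcases Nat.eq_zero_or_pos n with rfl | hn
  · simp [Epi, desNum, DesSet]
  have hmemD : ∀ i : ℕ, i ∈ DesSet π ↔ (1 ≤ i ∧ i < 2*n) ∧ pval π (i+1) < pval π i := by
    intro i
    simp only [DesSet, Finset.mem_filter, Finset.mem_Ico]
  have hsym : ∀ i : ℕ, 1 ≤ i → i < 2*n →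
      (pval π (i+1) < pval π i ↔ pval π (2*n - i + 1) < pval π (2*n - i)) := by
    intro i h1 h2
    have hA := hC i (Finset.mem_Icc.mpr ⟨h1, by omega⟩)
    have hB := hC (i+1) (Finset.mem_Icc.mpr ⟨by omega, by omega⟩)
    have e1 : 2*n + 1 - i = 2*n - i + 1 := by omega
    have e2 : 2*n + 1 - (i+1) = 2*n - i := by omega
    rw [e1] at hA
    rw [e2] at hB
    omega
  have hEpi : n ∈ Epi π ↔ n ∈ DesSet π := by
    have hA := hC n (Finset.mem_Icc.mpr ⟨hn, by omega⟩)
    have e : 2*n + 1 - n = n + 1 := by omega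
    rw [e] at hA
    rw [hmemD]
    simp only [Epi, Finset.mem_filter, Finset.mem_Icc]
    omega
  have hcard : ((DesSet π).filter (fun j => n < j)).card
      = ((DesSet π).filter (fun j => j < n)).card := by
    apply Finset.card_nbij' (fun i => 2*n - i) (fun j => 2*n - j)
    · intro a ha
      simp only [Finset.coe_filter, Set.mem_setOf_eq, Finset.mem_coe, Finset.mem_filter] at ha ⊢
      obtain ⟨haD, han⟩ := ha
      obtain ⟨⟨h1, h2⟩, h3⟩ := (hmemD a).mp haD
      exact ⟨(hmemD _).mpr ⟨⟨by omega, by omega⟩, (hsym a h1 h2).mp h3⟩, by omega⟩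
    · intro b hb
      simp only [Finset.coe_filter, Set.mem_setOf_eq, Finset.mem_coe, Finset.mem_filter] at hb ⊢
      obtain ⟨hbD, hbn⟩ := hb
      obtain ⟨⟨h1, h2⟩, h3⟩ := (hmemD b).mp hbD
      exact ⟨(hmemD _).mpr ⟨⟨by omega, by omega⟩, (hsym b h1 h2).mp h3⟩, by omega⟩
    · intro a ha
      simp only [Finset.coe_filter, Set.mem_setOf_eq, Finset.mem_coe, Finset.mem_filter] at ha
      have := ((hmemD a).mp ha.1).1
      simp only
      omega
    · intro b hb
      simp only [Finset.coe_filter, Set.mem_setOf_eq, Finset.mem_coe, Finset.mem_filter] at hb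
      have := ((hmemD b).mp hb.1).1
      simp only
      omega
  have htot := Finset.card_filter_add_card_filter_not (s := DesSet π)
      (p := fun j => j ≤ n)
  simp only [not_le] at htot
  by_cases hD : n ∈ DesSet π
  · rw [if_pos (hEpi.mpr hD)]
    have hins : (DesSet π).filter (fun j => j ≤ n)
        = insert n ((DesSet π).filter (fun j => j < n)) := by
      ext x
      simp only [Finset.mem_filter, Finset.mem_insert]
      constructor
      · rintro ⟨hx, hle⟩
        rcases eq_or_lt_of_le hle with h | h
        · exact Or.inl h
        · exact Or.inr ⟨hx, h⟩
      · rintro (rfl | ⟨hx, hlt⟩)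
        · exact ⟨hD, le_refl _⟩
        · exact ⟨hx, hlt.le⟩
    have hnot : n ∉ (DesSet π).filter (fun j => j < n) := by simp
    have hc2 : ((DesSet π).filter (fun j => j ≤ n)).card
        = ((DesSet π).filter (fun j => j < n)).card + 1 := by
      rw [hins, Finset.card_insert_of_notMem hnot]
    unfold desNum
    omega
  · rw [if_neg (fun h => hD (hEpi.mp h))]
    have heq : (DesSet π).filter (fun j => j ≤ n) = (DesSet π).filter (fun j => j < n) := by
      ext x
      simp only [Finset.mem_filter]
      constructor
      · rintro ⟨hx, hle⟩
        refine ⟨hx, lt_of_le_of_ne hle ?_⟩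
        rintro rfl
        exact hD hx
      · rintro ⟨hx, hlt⟩
        exact ⟨hx, hlt.le⟩
    have hc2 := congrArg Finset.card heq
    unfold desNum
    omega
end

section
/- For each subset E of [n], define Des(E) = {i ∈ E : i+1 ∉ E} and maj(E) = ∑_{i ∈ Des(E)} i. Then the polynomials p_n(q) = ∑_{E ⊆ [n]} q^{maj(E)} satisfy the recurrence p_n(q) = (1+q) p_{n-1}(q) + (q^n - q) p_{n-2}(q) for n ≥ 2, with p_0(q) = 1 and p_1(q) = 1 + q. -/
open Finset Polynomial
open scoped Classical

/-- For `E ⊆ [n]`, `Des(E) = {i ∈ E : i+1 ∉ E}`. -/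
def DesE (E : Finset ℕ) : Finset ℕ := E.filter (fun i => i + 1 ∉ E)

/-- `des(E) = |Des(E)|`. -/
def desE (E : Finset ℕ) : ℕ := (DesE E).card

/-- `maj(E) = ∑_{i ∈ Des(E)} i`. -/
def majE (E : Finset ℕ) : ℕ := ∑ i ∈ DesE E, i


lemma DesE_insert (n : ℕ) (hn : 1 ≤ n) (E : Finset ℕ) (hE : E ⊆ Finset.Icc 1 (n-1)) :
    DesE (insert n E) = insert n ((DesE E).erase (n-1)) := by
  have hle : ∀ j ∈ E, 1 ≤ j ∧ j ≤ n - 1 := fun j h => Finset.mem_Icc.mp (hE h)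
  ext i
  simp only [DesE, mem_filter, mem_insert, mem_erase]
  constructor
  · rintro ⟨h1 | h1, h2⟩
    · left; exact h1
    · right
      refine ⟨?_, h1, fun h => h2 (Or.inr h)⟩
      intro hi
      exact h2 (Or.inl (by omega))
  · rintro (rfl | ⟨hne, h1, h2⟩)
    · refine ⟨Or.inl rfl, ?_⟩
      rintro (h | h)
      · omega
      · have := hle _ h; omega
    · refine ⟨Or.inr h1, ?_⟩
      rintro (h | h)
      · have := hle _ h1; omega
      · exact h2 h

lemma majE_insert_mem (n : ℕ) (hn : 1 ≤ n) (E : Finset ℕ) (hE : E ⊆ Finset.Icc 1 (n-1))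
    (hm : n - 1 ∈ E) : majE (insert n E) = majE E + 1 := by
  have hnE : n ∉ E := fun h => by have := Finset.mem_Icc.mp (hE h); omega
  have hd : n - 1 ∈ DesE E := by
    simp only [DesE, mem_filter]
    refine ⟨hm, fun h => ?_⟩
    have := Finset.mem_Icc.mp (hE h); omega
  have hnd : n ∉ (DesE E).erase (n-1) := by
    intro h
    have := Finset.mem_of_mem_erase h
    exact hnE (Finset.mem_of_mem_filter _ this)
  have h1 : majE (insert n E) = n + ∑ i ∈ (DesE E).erase (n-1), i := by
    rw [majE, DesE_insert n hn E hE, Finset.sum_insert hnd]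
  have h2 : ∑ i ∈ (DesE E).erase (n-1), i + (n-1) = majE E :=
    Finset.sum_erase_add _ _ hd
  omega

lemma majE_insert_notMem (n : ℕ) (hn : 1 ≤ n) (E : Finset ℕ) (hE : E ⊆ Finset.Icc 1 (n-1))
    (hm : n - 1 ∉ E) : majE (insert n E) = majE E + n := by
  have hnd : n ∉ (DesE E).erase (n-1) := by
    intro h
    have := Finset.mem_of_mem_erase h
    have := Finset.mem_of_mem_filter _ this
    have := Finset.mem_Icc.mp (hE this); omega
  have he : (DesE E).erase (n-1) = DesE E := by
    apply Finset.erase_eq_of_notMem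
    intro h
    exact hm (Finset.mem_of_mem_filter _ h)
  rw [majE, DesE_insert n hn E hE, Finset.sum_insert hnd, he]
  rw [majE]; ring

/-- The polynomials `p_n(q) = ∑_{E ⊆ [n]} q^{maj(E)}` satisfy
`p_n = (1+q) p_{n-1} + (q^n - q) p_{n-2}` for `n ≥ 2`, with `p_0 = 1`, `p_1 = 1 + q`. -/
theorem majE_recurrence (R : Type*) [CommRing R] (q : R) :
    (∑ E ∈ (Finset.Icc 1 0).powerset, q ^ majE E) = 1 ∧
    (∑ E ∈ (Finset.Icc 1 1).powerset, q ^ majE E) = 1 + q ∧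
    ∀ n, 2 ≤ n →
      (∑ E ∈ (Finset.Icc 1 n).powerset, q ^ majE E) =
        (1 + q) * (∑ E ∈ (Finset.Icc 1 (n - 1)).powerset, q ^ majE E) +
          (q ^ n - q) * (∑ E ∈ (Finset.Icc 1 (n - 2)).powerset, q ^ majE E) := by
  refine ⟨?_, ?_, ?_⟩
  · simp [majE, DesE]
  · have : Finset.Icc 1 1 = {1} := rfl
    rw [this]
    rw [show ({1} : Finset ℕ).powerset = {∅, {1}} from rfl]
    rw [Finset.sum_pair (by decide)]
    have h1 : majE ∅ = 0 := by simp [majE, DesE]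
    have h2 : majE {1} = 1 := by decide
    rw [h1, h2]; ring
  · intro n hn
    have hins : Finset.Icc 1 n = insert n (Finset.Icc 1 (n-1)) := by
      ext i; simp [Finset.mem_Icc]; omega
    have hnmem : n ∉ Finset.Icc 1 (n-1) := by simp [Finset.mem_Icc]; omega
    rw [hins, Finset.sum_powerset_insert hnmem]
    set S := (Finset.Icc 1 (n-1)).powerset with hS
    have hsplit : ∑ E ∈ S, q ^ majE (insert n E) =
        (∑ E ∈ S.filter (fun E => n - 1 ∈ E), q ^ (majE E + 1)) +
        (∑ E ∈ S.filter (fun E => n - 1 ∉ E), q ^ (majE E + n)) := by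
      rw [← Finset.sum_filter_add_sum_filter_not S (fun E => n - 1 ∈ E)]
      congr 1
      · apply Finset.sum_congr rfl
        intro E hE
        rw [Finset.mem_filter] at hE
        rw [majE_insert_mem n (by omega) E (Finset.mem_powerset.mp hE.1) hE.2]
      · apply Finset.sum_congr rfl
        intro E hE
        rw [Finset.mem_filter] at hE
        rw [majE_insert_notMem n (by omega) E (Finset.mem_powerset.mp hE.1) hE.2]
    have hfilt : S.filter (fun E => n - 1 ∉ E) = (Finset.Icc 1 (n-2)).powerset := by
      ext E
      simp only [Finset.mem_filter, Finset.mem_powerset, hS]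
      have : Finset.Icc 1 (n-2) = (Finset.Icc 1 (n-1)).erase (n-1) := by
        ext i; simp [Finset.mem_Icc]; omega
      rw [this, Finset.subset_erase]
    have hcompl : ∑ E ∈ S.filter (fun E => n - 1 ∈ E), q ^ majE E =
        (∑ E ∈ (Finset.Icc 1 (n-1)).powerset, q ^ majE E) -
        (∑ E ∈ (Finset.Icc 1 (n-2)).powerset, q ^ majE E) := by
      rw [← hfilt, eq_sub_iff_add_eq]
      exact Finset.sum_filter_add_sum_filter_not S _ _
    rw [hsplit, hfilt]
    simp only [pow_add]
    rw [← Finset.sum_mul, ← Finset.sum_mul, hcompl]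
    ring
end

section
/- For every subset E of [n], des(E) = |{i ∈ E : i+1 ∉ E}| satisfies: the number of subsets E ⊆ [n] with des(E) = k equals the binomial coefficient C(n+1, 2k). -/
open Finset Polynomial
open scoped Classical

lemma DesE_insert_succ (E : Finset ℕ) (n : ℕ) (h1 : n+1 ∉ E) (h2 : n+2 ∉ E) :
    DesE (insert (n+1) E) = insert (n+1) ((DesE E).erase n) := by
  ext i
  simp only [DesE, mem_filter, mem_insert, mem_erase]
  constructor
  · rintro ⟨hi | hi, hni⟩
    · exact Or.inl hi
    · right
      have h1' : i + 1 ≠ n + 1 ∧ i + 1 ∉ E := by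
        constructor
        · intro h; exact hni (Or.inl h)
        · intro h; exact hni (Or.inr h)
      refine ⟨?_, hi, h1'.2⟩
      intro h; exact h1'.1 (by omega)
  · rintro (h | ⟨hne, hiE, hi1⟩)
    · subst h
      refine ⟨Or.inl rfl, ?_⟩
      rintro (h | h)
      · omega
      · exact h2 h
    · refine ⟨Or.inr hiE, ?_⟩
      rintro (h | h)
      · exact hne (by omega)
      · exact hi1 h

lemma desE_insert_succ (E : Finset ℕ) (n : ℕ) (h1 : n+1 ∉ E) (h2 : n+2 ∉ E) :
    desE (insert (n+1) E) = if n ∈ E then desE E else desE E + 1 := by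
  have hsub : DesE E ⊆ E := filter_subset _ _
  have hn1 : n + 1 ∉ (DesE E).erase n := fun h => h1 (hsub (mem_of_mem_erase h))
  rw [desE, DesE_insert_succ E n h1 h2, card_insert_of_notMem hn1]
  by_cases hn : n ∈ E
  · have hnd : n ∈ DesE E := mem_filter.mpr ⟨hn, h1⟩
    rw [card_erase_of_mem hnd, if_pos hn]
    have hpos : 1 ≤ (DesE E).card := card_pos.mpr ⟨n, hnd⟩
    unfold desE
    omega
  · have hnd : n ∉ DesE E := fun h => hn (hsub h)
    rw [erase_eq_of_notMem hnd, if_neg hn]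
    rfl

lemma desE_pos_of_mem_top (E : Finset ℕ) (n : ℕ) (hE : E ⊆ Finset.Icc 1 n)
    (hn : n ∈ E) : desE E ≠ 0 := by
  have hn1 : n + 1 ∉ E := fun h => by
    have := mem_Icc.mp (hE h); omega
  have hmem : n ∈ DesE E := mem_filter.mpr ⟨hn, hn1⟩
  have := card_pos.mpr ⟨n, hmem⟩
  unfold desE
  omega

lemma desE_empty : desE ∅ = 0 := rfl

/-- the combined induction -/
lemma key (n : ℕ) : ∀ k : ℕ,
    (((Finset.Icc 1 n).powerset).filter (fun E => desE E = k ∧ n ∉ E)).card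
      = n.choose (2*k) ∧
    (((Finset.Icc 1 n).powerset).filter (fun E => desE E = k+1 ∧ n ∈ E)).card
      = n.choose (2*k+1) ∧
    (((Finset.Icc 1 n).powerset).filter (fun E => desE E = 0 ∧ n ∈ E)).card = 0 := by
  induction n with
  | zero =>
    intro k
    have h0 : (Finset.Icc 1 0) = (∅ : Finset ℕ) := by decide
    rw [h0, powerset_empty]
    refine ⟨?_, ?_, ?_⟩
    · rw [filter_singleton]
      rcases k with _ | k
      · simp [desE_empty]
      · rw [if_neg (by simp [desE_empty])]
        simp [Nat.choose_eq_zero_of_lt (by omega : 0 < 2*(k+1))]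
    · rw [filter_singleton, if_neg (by simp)]
      simp [Nat.choose_eq_zero_of_lt (by omega : 0 < 2*k+1)]
    · rw [filter_singleton, if_neg (by simp)]
      simp
  | succ n ih =>
    -- total count at level n
    have total : ∀ k, (((Finset.Icc 1 n).powerset).filter (fun E => desE E = k)).card
        = (n+1).choose (2*k) := by
      intro k
      have split : (((Finset.Icc 1 n).powerset).filter (fun E => desE E = k)).card =
          (((Finset.Icc 1 n).powerset).filter (fun E => desE E = k ∧ n ∉ E)).card +
          (((Finset.Icc 1 n).powerset).filter (fun E => desE E = k ∧ n ∈ E)).card := by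
        rw [← card_union_of_disjoint]
        · congr 1
          ext E
          simp only [mem_union, mem_filter]
          tauto
        · rw [disjoint_left]
          intro E hE hE'
          simp only [mem_filter] at hE hE'
          tauto
      rcases k with _ | k
      · rw [split, (ih 0).1, (ih 0).2.2]
        simp
      · rw [split, (ih (k+1)).1, (ih k).2.1]
        have h2 : 2*(k+1) = (2*k+1)+1 := by ring
        rw [h2, Nat.choose_succ_succ' n (2*k+1)]
        omega
    intro k
    refine ⟨?_, ?_, ?_⟩
    · -- subsets of [n+1] not containing n+1 with des = k
      have heq : ((Finset.Icc 1 (n+1)).powerset).filter (fun E => desE E = k ∧ n+1 ∉ E)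
          = ((Finset.Icc 1 n).powerset).filter (fun E => desE E = k) := by
        ext E
        simp only [mem_filter, mem_powerset]
        constructor
        · rintro ⟨hsub, hd, hn⟩
          refine ⟨fun x hx => ?_, hd⟩
          have hx1 := mem_Icc.mp (hsub hx)
          have : x ≠ n+1 := fun h => hn (h ▸ hx)
          rw [mem_Icc]; omega
        · rintro ⟨hsub, hd⟩
          refine ⟨fun x hx => ?_, hd, fun h => ?_⟩
          · have := mem_Icc.mp (hsub hx); rw [mem_Icc]; omega
          · have := mem_Icc.mp (hsub h); omega
      rw [heq, total k]
    · -- subsets of [n+1] containing n+1 with des = k+1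
      have hbij : (((Finset.Icc 1 (n+1)).powerset).filter
            (fun E => desE E = k+1 ∧ n+1 ∈ E)).card
          = (((Finset.Icc 1 n).powerset).filter
            (fun E => (desE E = k+1 ∧ n ∈ E) ∨ (desE E = k ∧ n ∉ E))).card := by
        refine Finset.card_bij' (fun E _ => E.erase (n+1)) (fun E _ => insert (n+1) E)
          ?hi ?hj ?li ?ri
        case hi =>
          intro E hE
          simp only [mem_filter, mem_powerset] at hE ⊢
          obtain ⟨hsub, hd, hmem⟩ := hE
          have hsub' : E.erase (n+1) ⊆ Finset.Icc 1 n := by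
            intro x hx
            have hxne := ne_of_mem_erase hx
            have := mem_Icc.mp (hsub (mem_of_mem_erase hx))
            rw [mem_Icc]; omega
          refine ⟨hsub', ?_⟩
          have h1 : n + 1 ∉ E.erase (n+1) := notMem_erase _ _
          have h2 : n + 2 ∉ E.erase (n+1) := fun h => by
            have := mem_Icc.mp (hsub' h); omega
          have hins : insert (n+1) (E.erase (n+1)) = E := insert_erase hmem
          have hd' := desE_insert_succ (E.erase (n+1)) n h1 h2
          rw [hins, hd] at hd'
          by_cases hn : n ∈ E
          · have hn' : n ∈ E.erase (n+1) := mem_erase.mpr ⟨by omega, hn⟩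
            left
            rw [if_pos hn'] at hd'
            exact ⟨hd'.symm, hn'⟩
          · have hn' : n ∉ E.erase (n+1) := fun h => hn (mem_of_mem_erase h)
            right
            rw [if_neg hn'] at hd'
            exact ⟨by omega, hn'⟩
        case hj =>
          intro E hE
          simp only [mem_filter, mem_powerset] at hE ⊢
          obtain ⟨hsub, hd⟩ := hE
          have h1 : n + 1 ∉ E := fun h => by
            have := mem_Icc.mp (hsub h); omega
          have h2 : n + 2 ∉ E := fun h => by
            have := mem_Icc.mp (hsub h); omega
          refine ⟨?_, ?_, mem_insert_self _ _⟩
          · intro x hx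
            rcases mem_insert.mp hx with h | h
            · rw [mem_Icc]; omega
            · have := mem_Icc.mp (hsub h); rw [mem_Icc]; omega
          · rw [desE_insert_succ E n h1 h2]
            rcases hd with ⟨hd, hn⟩ | ⟨hd, hn⟩
            · rw [if_pos hn, hd]
            · rw [if_neg hn, hd]
        case li =>
          intro E hE
          simp only [mem_filter, mem_powerset] at hE
          exact insert_erase hE.2.2
        case ri =>
          intro E hE
          simp only [mem_filter, mem_powerset] at hE
          apply erase_insert
          intro h
          have := mem_Icc.mp (hE.1 h); omega
      rw [hbij]
      have hsplit : (((Finset.Icc 1 n).powerset).filter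
            (fun E => (desE E = k+1 ∧ n ∈ E) ∨ (desE E = k ∧ n ∉ E))).card
          = (((Finset.Icc 1 n).powerset).filter (fun E => desE E = k+1 ∧ n ∈ E)).card
          + (((Finset.Icc 1 n).powerset).filter (fun E => desE E = k ∧ n ∉ E)).card := by
        rw [← card_union_of_disjoint]
        · congr 1
          ext E
          simp only [mem_union, mem_filter]
          tauto
        · rw [disjoint_left]
          intro E hE hE'
          simp only [mem_filter] at hE hE'
          tauto
      rw [hsplit, (ih k).2.1, (ih k).1]
      have h2 : (2*k+1)+1 = 2*k+1+1 := rfl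
      rw [Nat.choose_succ_succ' n (2*k)]
      omega
    · -- des = 0 and n+1 ∈ E is impossible
      rw [card_eq_zero, filter_eq_empty_iff]
      intro E hE
      simp only [mem_powerset] at hE
      rintro ⟨hd, hn⟩
      exact desE_pos_of_mem_top E (n+1) hE hn hd

/-- The number of subsets `E ⊆ [n]` with `des(E) = k` is `C(n+1, 2k)`. -/
theorem card_subsets_with_desE (n k : ℕ) :
    (((Finset.Icc 1 n).powerset).filter (fun E => desE E = k)).card =
      (n + 1).choose (2 * k) := by
  have split : (((Finset.Icc 1 n).powerset).filter (fun E => desE E = k)).card =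
      (((Finset.Icc 1 n).powerset).filter (fun E => desE E = k ∧ n ∉ E)).card +
      (((Finset.Icc 1 n).powerset).filter (fun E => desE E = k ∧ n ∈ E)).card := by
    rw [← card_union_of_disjoint]
    · congr 1
      ext E
      simp only [mem_union, mem_filter]
      tauto
    · rw [disjoint_left]
      intro E hE hE'
      simp only [mem_filter] at hE hE'
      tauto
  rcases k with _ | k
  · rw [split, (key n 0).1, (key n 0).2.2]
    simp
  · rw [split, (key n (k+1)).1, (key n k).2.1]
    have h1 : 2*(k+1) = (2*k+1)+1 := by ring
    rw [h1, Nat.choose_succ_succ' n (2*k+1)]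
    omega
end

section
/- The set of 321-avoiding centrosymmetric involutions of S_{2n+1} is in bijection with the set of 321-avoiding involutions of S_n, via the map sending α ∈ I_n(321) to the permutation π = α (n+1) α' of S_{2n+1}, where α'(i) = 2n+2 - α(2n+2-i) for n+2 ≤ i ≤ 2n+1. Moreover under this bijection des^+(π) = des(α) and maj^+(π) = maj(α). -/
open Finset Polynomial
open scoped Classical

/-- The set `I_n(321)` of 321-avoiding involutions of `S_n`. -/
noncomputable def Iset (n : ℕ) : Finset (Equiv.Perm (Fin n)) :=
  Finset.univ.filter (fun α => Function.Involutive α ∧ Avoids321 α)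

/-- The set `I^C_{2n+1}(321)` of 321-avoiding centrosymmetric involutions of `S_{2n+1}`. -/
noncomputable def ICodd (n : ℕ) : Finset (Equiv.Perm (Fin (2 * n + 1))) :=
  Finset.univ.filter (fun π => Function.Involutive π ∧ Centro π ∧ Avoids321 π)

namespace OC
variable {n : ℕ}

lemma pval_eq {m : ℕ} (π : Equiv.Perm (Fin m)) {j : ℕ} (h : j - 1 < m) :
    pval π j = (π ⟨j - 1, h⟩ : ℕ) + 1 := by simp [pval, h]

def fwdFun (α : Equiv.Perm (Fin n)) : Fin (2*n+1) → Fin (2*n+1) := fun i =>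
  if h : (i : ℕ) < n then
    ⟨(α ⟨i, h⟩ : ℕ), by have := (α ⟨i, h⟩).isLt; omega⟩
  else if h2 : (i : ℕ) = n then i
  else
    ⟨2*n - (α ⟨2*n - i, by have := i.isLt; omega⟩ : ℕ), by omega⟩

lemma fwd_lt (α : Equiv.Perm (Fin n)) {i : Fin (2*n+1)} (h : (i:ℕ) < n) :
    (fwdFun α i : ℕ) = α ⟨i, h⟩ := by simp [fwdFun, h]

lemma fwd_mid (α : Equiv.Perm (Fin n)) {i : Fin (2*n+1)} (h : (i:ℕ) = n) :
    (fwdFun α i : ℕ) = n := by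
  have h1 : ¬ (i:ℕ) < n := by omega
  simp [fwdFun, h1, h]

lemma fwd_gt (α : Equiv.Perm (Fin n)) {i : Fin (2*n+1)} (h : n < (i:ℕ)) :
    (fwdFun α i : ℕ) = 2*n - α ⟨2*n - i, by have := i.isLt; omega⟩ := by
  have h1 : ¬ (i:ℕ) < n := by omega
  have h2 : ¬ (i:ℕ) = n := by omega
  simp [fwdFun, h1, h2]

lemma fwd_gt' (α : Equiv.Perm (Fin n)) {i : Fin (2*n+1)} (h : n < (i:ℕ)) :
    n < (fwdFun α i : ℕ) := by
  rw [fwd_gt α h]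
  have := (α ⟨2*n - i, by have := i.isLt; omega⟩).isLt
  omega

lemma fwd_invol {α : Equiv.Perm (Fin n)} (hα : Function.Involutive α) :
    Function.Involutive (fwdFun α) := by
  intro i
  rcases lt_trichotomy (i:ℕ) n with h | h | h
  · have hlt : (fwdFun α i : ℕ) < n := by rw [fwd_lt α h]; exact (α ⟨i,h⟩).isLt
    apply Fin.ext
    rw [fwd_lt α hlt]
    have e : (⟨(fwdFun α i : ℕ), hlt⟩ : Fin n) = α ⟨i, h⟩ := Fin.ext (fwd_lt α h)
    rw [e, hα]
  · have e1 := fwd_mid α h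
    apply Fin.ext
    rw [fwd_mid α e1]
    omega
  · have hv := (α ⟨2*n - i, by have := i.isLt; omega⟩).isLt
    have e1 := fwd_gt α h
    have hgt : n < (fwdFun α i : ℕ) := fwd_gt' α h
    apply Fin.ext
    rw [fwd_gt α hgt]
    have e2 : (⟨2*n - (fwdFun α i : ℕ), by omega⟩ : Fin n) =
        α ⟨2*n - i, by have := i.isLt; omega⟩ := by
      apply Fin.ext; simp only [e1]; omega
    rw [e2, hα]
    simp only [Fin.val_mk]
    have := i.isLt
    omega

noncomputable def fwdPerm {α : Equiv.Perm (Fin n)} (hα : Function.Involutive α) :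
    Equiv.Perm (Fin (2*n+1)) := (fwd_invol hα).toPerm

lemma fwdPerm_apply {α : Equiv.Perm (Fin n)} (hα : Function.Involutive α)
    (i : Fin (2*n+1)) : fwdPerm hα i = fwdFun α i := rfl

lemma pval_le {m : ℕ} (π : Equiv.Perm (Fin m)) (j : ℕ) : pval π j ≤ m := by
  unfold pval
  split
  · exact (π _).isLt
  · omega

lemma pval_fwd_low {α : Equiv.Perm (Fin n)} (hα : Function.Involutive α)
    {j : ℕ} (h1 : 1 ≤ j) (h2 : j ≤ n) : pval (fwdPerm hα) j = pval α j := by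
  have hj : j - 1 < n := by omega
  rw [pval_eq (fwdPerm hα) (by omega), pval_eq α hj, fwdPerm_apply,
    fwd_lt α (i := ⟨j-1, by omega⟩) hj]

lemma pval_fwd_mid {α : Equiv.Perm (Fin n)} (hα : Function.Involutive α) :
    pval (fwdPerm hα) (n+1) = n + 1 := by
  rw [pval_eq (fwdPerm hα) (by omega), fwdPerm_apply,
    fwd_mid α (i := ⟨n+1-1, by omega⟩) (by simp)]

lemma pval_fwd_high {α : Equiv.Perm (Fin n)} (hα : Function.Involutive α)
    {j : ℕ} (h1 : n + 2 ≤ j) (h2 : j ≤ 2*n+1) :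
    pval (fwdPerm hα) j = 2*n+2 - pval α (2*n+2-j) := by
  have hj : (2*n+2-j) - 1 < n := by omega
  rw [pval_eq (fwdPerm hα) (by omega), pval_eq α hj, fwdPerm_apply,
    fwd_gt α (i := ⟨j-1, by omega⟩) (by simp; omega)]
  have harg : (⟨2*n - ↑(⟨j-1, by omega⟩ : Fin (2*n+1)), by simp; omega⟩ : Fin n)
      = ⟨(2*n+2-j) - 1, hj⟩ := by simp only [Fin.mk.injEq]; omega
  rw [harg]
  have := (α ⟨(2*n+2-j) - 1, hj⟩).isLt
  omega

lemma fwd_centro {α : Equiv.Perm (Fin n)} (hα : Function.Involutive α) :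
    Centro (fwdPerm hα) := by
  intro j hj
  simp only [Finset.mem_Icc] at hj
  rcases hj with ⟨hj1, hj2⟩
  rcases lt_trichotomy j (n+1) with h | h | h
  · have e1 := pval_fwd_low hα hj1 (by omega)
    have e2 := pval_fwd_high hα (j := 2*n+1+1-j) (by omega) (by omega)
    have e3 : 2*n+2 - (2*n+1+1-j) = j := by omega
    rw [e1, e2, e3]
    have h4 := pval_le α j
    have h5 : 1 ≤ pval α j := by
      rw [pval_eq α (by omega)]; omega
    omega
  · subst h
    have : 2*n+1+1-(n+1) = n+1 := by omega
    rw [this, pval_fwd_mid hα]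
    omega
  · have e1 := pval_fwd_high hα (j := j) (by omega) hj2
    have e2 := pval_fwd_low hα (j := 2*n+1+1-j) (by omega) (by omega)
    rw [e1, e2]
    have h4 := pval_le α (2*n+2-j)
    have h5 : 1 ≤ pval α (2*n+2-j) := by
      rw [pval_eq α (by omega)]; omega
    have e3 : 2*n+1+1-j = 2*n+2-j := by omega
    rw [e3]
    omega

lemma fwd_avoids {α : Equiv.Perm (Fin n)} (hα : Function.Involutive α)
    (ha : Avoids321 α) : Avoids321 (fwdPerm hα) := by
  rintro ⟨i, j, k, hij, hjk, h1, h2⟩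
  rw [Fin.lt_def] at hij hjk h1 h2
  simp only [fwdPerm_apply] at h1 h2
  rcases lt_trichotomy (k:ℕ) n with hk | hk | hk
  · have hjn : (j:ℕ) < n := by omega
    have hin : (i:ℕ) < n := by omega
    rw [fwd_lt α hk, fwd_lt α hjn] at h1
    rw [fwd_lt α hjn, fwd_lt α hin] at h2
    exact ha ⟨⟨i, hin⟩, ⟨j, hjn⟩, ⟨k, hk⟩, by rw [Fin.lt_def]; exact hij,
      by rw [Fin.lt_def]; exact hjk, by rw [Fin.lt_def]; exact h1,
      by rw [Fin.lt_def]; exact h2⟩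
  · have hjn : (j:ℕ) < n := by omega
    rw [fwd_mid α hk] at h1
    have : (fwdFun α j : ℕ) < n := by
      rw [fwd_lt α hjn]; exact (α ⟨j, hjn⟩).isLt
    omega
  · have hkv := fwd_gt' α hk
    have hjn : n < (j:ℕ) := by
      by_contra hc
      push_neg at hc
      rcases lt_or_eq_of_le hc with hc | hc
      · have : (fwdFun α j : ℕ) < n := by
          rw [fwd_lt α hc]; exact (α ⟨j, hc⟩).isLt
        omega
      · rw [fwd_mid α hc] at h1; omega
    have hin : n < (i:ℕ) := by
      by_contra hc
      push_neg at hc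
      have hjv := fwd_gt' α hjn
      rcases lt_or_eq_of_le hc with hc | hc
      · have : (fwdFun α i : ℕ) < n := by
          rw [fwd_lt α hc]; exact (α ⟨i, hc⟩).isLt
        omega
      · rw [fwd_mid α hc] at h2; omega
    have hi2 := i.isLt
    have hj2 := j.isLt
    have hk2 := k.isLt
    rw [fwd_gt α hk, fwd_gt α hjn] at h1
    rw [fwd_gt α hjn, fwd_gt α hin] at h2
    have vk := (α ⟨2*n - k, by omega⟩).isLt
    have vj := (α ⟨2*n - j, by omega⟩).isLt
    have vi := (α ⟨2*n - i, by omega⟩).isLt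
    exact ha ⟨⟨2*n - k, by omega⟩, ⟨2*n - j, by omega⟩, ⟨2*n - i, by omega⟩,
      by rw [Fin.mk_lt_mk]; omega, by rw [Fin.mk_lt_mk]; omega,
      by rw [Fin.lt_def]; omega, by rw [Fin.lt_def]; omega⟩

section bwd
variable {π : Equiv.Perm (Fin (2*n+1))}

lemma centro' (hc : Centro π) {j : ℕ} (hj : j ≤ 2*n) :
    (π ⟨j, by omega⟩ : ℕ) + (π ⟨2*n-j, by omega⟩ : ℕ) = 2*n := by
  have h := hc (j+1) (by simp; omega)
  rw [pval_eq π (j := j+1) (by omega), pval_eq π (j := 2*n+1+1-(j+1)) (by omega)] at h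
  have e : (⟨j+1-1, by omega⟩ : Fin (2*n+1)) = ⟨j, by omega⟩ := by
    simp only [Fin.mk.injEq]; omega
  have e2 : (⟨2*n+1+1-(j+1)-1, by omega⟩ : Fin (2*n+1)) = ⟨2*n-j, by omega⟩ := by
    simp only [Fin.mk.injEq]; omega
  rw [e, e2] at h
  omega

lemma pi_fix (hc : Centro π) : (π ⟨n, by omega⟩ : ℕ) = n := by
  have h := centro' hc (j := n) (by omega)
  have e : (⟨2*n-n, by omega⟩ : Fin (2*n+1)) = ⟨n, by omega⟩ := by
    simp only [Fin.mk.injEq]; omega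
  rw [e] at h
  omega

lemma bwd_lt (hc : Centro π) (ha : Avoids321 π) {i : ℕ} (h : i < n) :
    (π ⟨i, by omega⟩ : ℕ) < n := by
  have hfix := pi_fix hc
  by_contra hge
  push_neg at hge
  rcases eq_or_lt_of_le hge with heq | hlt
  · have : π ⟨i, by omega⟩ = π ⟨n, by omega⟩ := by
      apply Fin.ext; omega
    have := π.injective this
    rw [Fin.mk.injEq] at this
    omega
  · have hcen := centro' hc (j := i) (by omega)
    exact ha ⟨⟨i, by omega⟩, ⟨n, by omega⟩, ⟨2*n-i, by omega⟩,
      by rw [Fin.mk_lt_mk]; omega, by rw [Fin.mk_lt_mk]; omega,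
      by rw [Fin.lt_def]; omega, by rw [Fin.lt_def]; omega⟩

lemma bwd_gt (hc : Centro π) (ha : Avoids321 π) {i : ℕ} (h : n < i) (h2 : i < 2*n+1) :
    n < (π ⟨i, by omega⟩ : ℕ) := by
  have hcen := centro' hc (j := i) (by omega)
  have hlt := bwd_lt hc ha (i := 2*n-i) (by omega)
  omega

noncomputable def bwdFun (hc : Centro π) (ha : Avoids321 π) : Fin n → Fin n :=
  fun i => ⟨(π ⟨i, by have := i.isLt; omega⟩ : ℕ), bwd_lt hc ha i.isLt⟩

lemma bwd_invol (hI : Function.Involutive π) (hc : Centro π) (ha : Avoids321 π) :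
    Function.Involutive (bwdFun hc ha) := by
  intro i
  apply Fin.ext
  show (π ⟨(π ⟨i, _⟩ : ℕ), _⟩ : ℕ) = (i : ℕ)
  have e : (⟨((π ⟨(i:ℕ), by have := i.isLt; omega⟩ : Fin (2*n+1)) : ℕ), by
      have := (π ⟨(i:ℕ), by have := i.isLt; omega⟩).isLt; omega⟩ : Fin (2*n+1))
      = π ⟨(i:ℕ), by have := i.isLt; omega⟩ := by apply Fin.ext; rfl
  rw [e, hI]

noncomputable def bwdPerm (hI : Function.Involutive π) (hc : Centro π)
    (ha : Avoids321 π) : Equiv.Perm (Fin n) := (bwd_invol hI hc ha).toPerm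

lemma bwdPerm_apply (hI : Function.Involutive π) (hc : Centro π) (ha : Avoids321 π)
    (i : Fin n) : ((bwdPerm hI hc ha i : Fin n) : ℕ)
      = (π ⟨i, by have := i.isLt; omega⟩ : ℕ) := rfl

lemma bwd_avoids (hI : Function.Involutive π) (hc : Centro π) (ha : Avoids321 π) :
    Avoids321 (bwdPerm hI hc ha) := by
  rintro ⟨i, j, k, hij, hjk, h1, h2⟩
  rw [Fin.lt_def] at hij hjk h1 h2
  rw [bwdPerm_apply, bwdPerm_apply] at h1 h2
  exact ha ⟨⟨i, by have := i.isLt; omega⟩, ⟨j, by have := j.isLt; omega⟩,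
    ⟨k, by have := k.isLt; omega⟩,
    by rw [Fin.mk_lt_mk]; omega, by rw [Fin.mk_lt_mk]; omega,
    by rw [Fin.lt_def]; omega, by rw [Fin.lt_def]; omega⟩

end bwd

end OC

/-- `I^C_{2n+1}(321)` is in bijection with `I_n(321)` via `α ↦ π = α (n+1) α'`, where
`α'(i) = 2n+2 - α(2n+2-i)` for `n+2 ≤ i ≤ 2n+1`; moreover `des^+(π) = des(α)` and
`maj^+(π) = maj(α)`. -/
theorem odd_centro_bijection (n : ℕ) :
    ∃ Φ : {α : Equiv.Perm (Fin n) // α ∈ Iset n} ≃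
        {π : Equiv.Perm (Fin (2 * n + 1)) // π ∈ ICodd n},
      ∀ α : {α : Equiv.Perm (Fin n) // α ∈ Iset n},
        (∀ i ∈ Finset.Icc 1 n, pval (Φ α).1 i = pval α.1 i) ∧
        pval (Φ α).1 (n + 1) = n + 1 ∧
        (∀ i ∈ Finset.Icc (n + 2) (2 * n + 1),
          pval (Φ α).1 i = 2 * n + 2 - pval α.1 (2 * n + 2 - i)) ∧
        ((DesSet (Φ α).1).filter (· ≤ n)).card = desNum α.1 ∧
        (∑ i ∈ (DesSet (Φ α).1).filter (· ≤ n), i) = majStat α.1 := by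
  classical
  have memI : ∀ α : Equiv.Perm (Fin n),
      α ∈ Iset n ↔ Function.Involutive α ∧ Avoids321 α := by
    intro α; simp [Iset]
  have memC : ∀ π : Equiv.Perm (Fin (2*n+1)),
      π ∈ ICodd n ↔ Function.Involutive π ∧ Centro π ∧ Avoids321 π := by
    intro π; simp [ICodd]
  have fmem : ∀ a : {α : Equiv.Perm (Fin n) // α ∈ Iset n},
      OC.fwdPerm ((memI a.1).1 a.2).1 ∈ ICodd n := by
    intro a
    rw [memC]
    exact ⟨OC.fwd_invol ((memI a.1).1 a.2).1, OC.fwd_centro ((memI a.1).1 a.2).1,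
      OC.fwd_avoids ((memI a.1).1 a.2).1 ((memI a.1).1 a.2).2⟩
  have bmem : ∀ p : {π : Equiv.Perm (Fin (2*n+1)) // π ∈ ICodd n},
      OC.bwdPerm ((memC p.1).1 p.2).1 ((memC p.1).1 p.2).2.1
        ((memC p.1).1 p.2).2.2 ∈ Iset n := by
    intro p
    obtain ⟨hI, hc, ha⟩ := (memC p.1).1 p.2
    rw [memI]
    exact ⟨OC.bwd_invol hI hc ha, OC.bwd_avoids hI hc ha⟩
  refine ⟨⟨fun a => ⟨_, fmem a⟩, fun p => ⟨_, bmem p⟩, ?_, ?_⟩, ?_⟩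
  · -- left inverse
    intro a
    apply Subtype.ext
    apply Equiv.ext
    intro i
    apply Fin.ext
    rw [OC.bwdPerm_apply, OC.fwdPerm_apply,
      OC.fwd_lt a.1 (i := ⟨(i:ℕ), by have := i.isLt; omega⟩) i.isLt]
  · -- right inverse
    intro p
    obtain ⟨h1, h2, h3⟩ := (memC p.1).1 p.2
    apply Subtype.ext
    apply Equiv.ext
    intro i
    apply Fin.ext
    rw [OC.fwdPerm_apply]
    rcases lt_trichotomy (i:ℕ) n with h | h | h
    · rw [OC.fwd_lt _ h, OC.bwdPerm_apply]
    · rw [OC.fwd_mid _ h]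
      have hfix := OC.pi_fix h2
      have e : i = (⟨n, by omega⟩ : Fin (2*n+1)) := Fin.ext h
      rw [e]
      omega
    · rw [OC.fwd_gt _ h, OC.bwdPerm_apply]
      have e2 : (⟨((⟨2*n - (i:ℕ), by have := i.isLt; omega⟩ : Fin n) : ℕ),
          by exact lt_of_lt_of_le (Fin.is_lt _) (by omega)⟩ : Fin (2*n+1))
          = ⟨2*n - (i:ℕ), by have := i.isLt; omega⟩ := Fin.ext rfl
      rw [e2]
      have hcen := OC.centro' h2 (j := (i:ℕ)) (by have := i.isLt; omega)
      have e : (⟨(i:ℕ), by have := i.isLt; omega⟩ : Fin (2*n+1)) = i := Fin.ext rfl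
      rw [e] at hcen
      omega
  · -- the statistics
    intro a
    have hα := ((memI a.1).1 a.2).1
    have hlow : ∀ i ∈ Finset.Icc 1 n, pval (OC.fwdPerm hα) i = pval a.1 i := by
      intro i hi
      simp only [Finset.mem_Icc] at hi
      exact OC.pval_fwd_low hα hi.1 hi.2
    have hmid : pval (OC.fwdPerm hα) (n+1) = n+1 := OC.pval_fwd_mid hα
    have hhigh : ∀ i ∈ Finset.Icc (n+2) (2*n+1),
        pval (OC.fwdPerm hα) i = 2*n+2 - pval a.1 (2*n+2 - i) := by
      intro i hi
      simp only [Finset.mem_Icc] at hi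
      exact OC.pval_fwd_high hα hi.1 hi.2
    have hset : (DesSet (OC.fwdPerm hα)).filter (· ≤ n) = DesSet a.1 := by
      ext i
      simp only [DesSet, Finset.mem_filter, Finset.mem_Ico]
      constructor
      · rintro ⟨⟨⟨hi1, hi2⟩, hdesc⟩, hin⟩
        have hne : i ≠ n := by
          intro he
          subst he
          rw [hmid, hlow i (by simp; omega)] at hdesc
          have := OC.pval_le a.1 i
          omega
        have hin' : i < n := by omega
        rw [hlow i (by simp; omega), hlow (i+1) (by simp; omega)] at hdesc
        exact ⟨⟨hi1, hin'⟩, hdesc⟩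
      · rintro ⟨⟨hi1, hi2⟩, hdesc⟩
        rw [← hlow i (by simp; omega), ← hlow (i+1) (by simp; omega)] at hdesc
        exact ⟨⟨⟨hi1, by omega⟩, hdesc⟩, by omega⟩
    exact ⟨hlow, hmid, hhigh,
      by show ((DesSet (OC.fwdPerm hα)).filter (· ≤ n)).card = desNum a.1
         rw [hset]; rfl,
      by show (∑ i ∈ (DesSet (OC.fwdPerm hα)).filter (· ≤ n), i) = majStat a.1
         rw [hset]; rfl⟩
end

section
/- For every 321-avoiding involution π of S_n, the length of the longest increasing subsequence of π equals the number of excedances of π plus the number of fixed points of π, and equivalently equals (n + fp(π))/2, where fp(π) is the number of fixed points of π. -/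
open Finset Polynomial
open scoped Classical

/-- The length of a longest increasing subsequence of `π`. -/
noncomputable def lisLen {n : ℕ} (π : Equiv.Perm (Fin n)) : ℕ :=
  (Finset.univ.powerset.filter
    (fun s : Finset (Fin n) => ∀ i ∈ s, ∀ j ∈ s, i < j → π i < π j)).sup Finset.card

/-- The number of excedances of `π`. -/
def excNum {n : ℕ} (π : Equiv.Perm (Fin n)) : ℕ :=
  (Finset.univ.filter (fun i : Fin n => i < π i)).card

/-- The number of fixed points of `π`. -/
def fpNum {n : ℕ} (π : Equiv.Perm (Fin n)) : ℕ :=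
  (Finset.univ.filter (fun i : Fin n => π i = i)).card

/-- For a 321-avoiding involution `π ∈ S_n`, the length of a longest increasing
subsequence equals the number of excedances plus the number of fixed points,
equivalently `(n + fp(π))/2`. -/
theorem lis_of_avoiding_involution (n : ℕ) (π : Equiv.Perm (Fin n))
    (hinv : Function.Involutive π) (hav : Avoids321 π) :
    lisLen π = excNum π + fpNum π ∧ 2 * lisLen π = n + fpNum π := by
  classical
  set E := Finset.univ.filter (fun i : Fin n => i < π i) with hE
  set D := Finset.univ.filter (fun i : Fin n => π i < i) with hD
  set F := Finset.univ.filter (fun i : Fin n => π i = i) with hF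
  set W := Finset.univ.filter (fun i : Fin n => π i ≤ i) with hW
  -- D and E have the same cardinality via the involution
  have hDE : D.card = E.card := by
    apply Finset.card_bij (fun a _ => π a)
    · intro a ha
      simp only [hD, hE, Finset.mem_filter, Finset.mem_univ, true_and] at ha ⊢
      rw [hinv a]; exact ha
    · intro a _ b _ h; exact π.injective h
    · intro b hb
      simp only [hE, hD, Finset.mem_filter, Finset.mem_univ, true_and] at hb ⊢
      exact ⟨π b, by rw [hinv b]; exact hb, hinv b⟩
  -- W = D ∪ F
  have hWDF : W = D ∪ F := by
    ext i
    simp only [hW, hD, hF, Finset.mem_union, Finset.mem_filter, Finset.mem_univ, true_and]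
    exact le_iff_lt_or_eq
  have hWcard : W.card = D.card + F.card := by
    rw [hWDF, Finset.card_union_of_disjoint]
    rw [Finset.disjoint_filter]
    intro i _ h1 h2
    exact absurd h2 (ne_of_lt h1)
  -- n = E.card + W.card
  have hn : n = E.card + W.card := by
    have := Finset.card_filter_add_card_filter_not
      (s := (Finset.univ : Finset (Fin n))) (p := fun i : Fin n => i < π i)
    simp only [not_lt] at this
    rw [← hE, ← hW] at this
    simpa [Finset.card_univ] using this.symm
  -- W is an increasing subsequence
  have hWinc : ∀ i ∈ W, ∀ j ∈ W, i < j → π i < π j := by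
    intro i hi j hj hij
    simp only [hW, Finset.mem_filter, Finset.mem_univ, true_and] at hi hj
    by_contra hle
    push_neg at hle
    rcases lt_or_eq_of_le hle with hlt | heq
    · -- π j < π i ≤ i < j : positions π j < i < j give pattern 321
      exact hav ⟨π j, i, j, lt_of_lt_of_le hlt hi, hij,
        hlt, by rw [hinv j]; exact lt_of_le_of_lt hi hij⟩
    · exact absurd (π.injective heq.symm) (ne_of_lt hij)
  -- any increasing subsequence injects into W
  have hub : ∀ s : Finset (Fin n), (∀ i ∈ s, ∀ j ∈ s, i < j → π i < π j) →
      s.card ≤ W.card := by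
    intro s hs
    apply Finset.card_le_card_of_injOn (fun i => if π i ≤ i then i else π i)
    · intro a _
      simp only [hW, Finset.mem_coe, Finset.mem_filter, Finset.mem_univ, true_and]
      by_cases h : π a ≤ a
      · simp [h]
      · simp only [h, if_false]
        rw [hinv a]
        exact le_of_lt (lt_of_not_ge h)
    · intro a ha b hb hab
      simp only at hab
      by_cases h1 : π a ≤ a <;> by_cases h2 : π b ≤ b <;>
        simp only [h1, h2, if_true, if_false] at hab
      · exact hab
      · -- a = π b, ¬ π b ≤ b so b < π b = a, contra increasing
        exfalso
        have hba : b < a := hab ▸ lt_of_not_ge h2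
        have h3 : π b = a := hab.symm
        have h4 : π a = b := by rw [hab, hinv b]
        have := hs b hb a ha hba
        rw [h3, h4] at this
        exact lt_asymm hba this
      · exfalso
        have hab' : a < b := hab ▸ lt_of_not_ge h1
        have h4 : π b = a := by rw [← hab]; exact hinv a
        have := hs a ha b hb hab'
        rw [hab, h4] at this
        exact lt_asymm hab' this
      · exact π.injective hab
  -- lisLen π = W.card
  have hlis : lisLen π = W.card := by
    apply le_antisymm
    · apply Finset.sup_le
      intro s hsmem
      simp only [Finset.mem_filter, Finset.mem_powerset] at hsmem
      exact hub s hsmem.2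
    · apply Finset.le_sup (f := Finset.card)
      simp only [Finset.mem_filter, Finset.mem_powerset]
      exact ⟨Finset.subset_univ W, hWinc⟩
  have hexc : excNum π = E.card := rfl
  have hfp : fpNum π = F.card := rfl
  constructor
  · rw [hlis, hexc, hfp, hWcard, hDE]
  · rw [hlis, hexc, hfp, hWcard, hDE] at *
    omega
end
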